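/- arXiv:2206.09662 — 2 statements merged into one kernel-verified Lean document; each statement's English description precedes it below -/
import Mathlib

section
/- Let G = (V, E) be a finite connected simple graph and τ : V → ℕ a threshold function with τ(v) ≤ d_G(v) for every v ∈ V, and let G' and x be the multigraph and divisor of the standard construction. Then ts_G(τ) = dist_rec_{G'}(x). -/
variable {V : Type*} [Fintype V] [DecidableEq V]

/-- The degree of vertex `v` in the multigraph with edge-multiplicity function `m`. -/
def mgDeg (m : V → V → ℕ) (v : V) : ℕ := ∑ u, m v u

/-- The divisor obtained from `f` by firing vertex `v`. -/
def mgFire (m : V → V → ℕ) (f : V → ℤ) (v : V) : V → ℤ :=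
  fun u => if u = v then f v - mgDeg m v else f u + m v u

/-- The divisor obtained from `f` by firing the vertices of `L` in order. -/
def mgPlay (m : V → V → ℕ) (f : V → ℤ) (L : List V) : V → ℤ :=
  L.foldl (mgFire m) f

/-- `L` is a legal game from `f`: each fired vertex is active when fired. -/
def mgLegal (m : V → V → ℕ) : (V → ℤ) → List V → Prop
  | _, [] => True
  | f, v :: L => ((mgDeg m v : ℤ) ≤ f v) ∧ mgLegal m (mgFire m f v) L

/-- A divisor is stable if no vertex is active. -/
def mgStable (m : V → V → ℕ) (f : V → ℤ) : Prop := ∀ v, f v < (mgDeg m v : ℤ)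

/-- A divisor is halting if some legal game from it ends at a stable divisor. -/
def mgHalting (m : V → V → ℕ) (f : V → ℤ) : Prop :=
  ∃ L : List V, mgLegal m f L ∧ mgStable m (mgPlay m f L)

/-- A divisor is recurrent if some non-empty legal game from it leads back to it. -/
def mgRecurrent (m : V → V → ℕ) (f : V → ℤ) : Prop :=
  ∃ L : List V, L ≠ [] ∧ mgLegal m f L ∧ mgPlay m f L = f

/-- A divisor is effective if it is nonnegative everywhere. -/
def mgEffective (f : V → ℤ) : Prop := ∀ v, 0 ≤ f v

/-- The degree of a divisor. -/
def mgDegDiv (f : V → ℤ) : ℤ := ∑ v, f v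

/-- Distance of a divisor from a recurrent state. -/
noncomputable def mgDistRec (m : V → V → ℕ) (f : V → ℤ) : ℕ :=
  sInf {n : ℕ | ∃ g : V → ℤ, mgEffective g ∧ mgDegDiv g = (n : ℤ) ∧ mgRecurrent m (f + g)}

/-- Distance of a divisor from a non-halting state. -/
noncomputable def mgDistNonhalt (m : V → V → ℕ) (f : V → ℤ) : ℕ :=
  sInf {n : ℕ | ∃ g : V → ℤ, mgEffective g ∧ mgDegDiv g = (n : ℤ) ∧ ¬ mgHalting m (f + g)}

/-- A multigraph is connected if any two vertices are joined by a path of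
positive-multiplicity edges. -/
def mgConnected (m : V → V → ℕ) : Prop :=
  ∀ u v : V, Relation.ReflTransGen (fun a b => 0 < m a b) u v

/-- `f` and `g` are linearly equivalent: `f` can be transformed to `g` by firings. -/
def mgLinEquiv (m : V → V → ℕ) (f g : V → ℤ) : Prop :=
  ∃ L : List V, mgPlay m f L = g

/-- A divisor is winnable if it is linearly equivalent to an effective divisor. -/
def mgWinnable (m : V → V → ℕ) (f : V → ℤ) : Prop :=
  ∃ g : V → ℤ, mgEffective g ∧ mgLinEquiv m f g

/-- The rank of a divisor. -/
noncomputable def mgRank (m : V → V → ℕ) (f : V → ℤ) : ℤ :=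
  ((sInf {n : ℕ | ∃ g : V → ℤ, mgEffective g ∧ mgDegDiv g = (n : ℤ) ∧
    ¬ mgWinnable m (f - g)} : ℕ) : ℤ) - 1

/-- One round of the activation process: every vertex with at least `τ v`
active neighbors becomes active (and active vertices stay active). -/
def tssStep (G : SimpleGraph V) [DecidableRel G.Adj] (τ : V → ℕ) (A : Finset V) : Finset V :=
  A ∪ Finset.univ.filter (fun v => τ v ≤ (A.filter (fun u => G.Adj v u)).card)

/-- `S` is a target set: the activation process starting from `S` eventually
activates all vertices. -/
def tssIsTargetSet (G : SimpleGraph V) [DecidableRel G.Adj] (τ : V → ℕ) (S : Finset V) : Prop :=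
  ∃ n : ℕ, (tssStep G τ)^[n] S = Finset.univ

/-- Minimum cardinality of a target set. -/
noncomputable def tssMin (G : SimpleGraph V) [DecidableRel G.Adj] (τ : V → ℕ) : ℕ :=
  sInf {k : ℕ | ∃ S : Finset V, tssIsTargetSet G τ S ∧ S.card = k}

/-- Auxiliary (one-directional) edge multiplicities of the standard construction.
In the vertex type `(V ⊕ V ⊕ V) ⊕ G.Dart`, the first, second and third summands
of `V ⊕ V ⊕ V` encode `v_i`, `v_c`, `v_o` respectively, and a dart `d = (u, v)`
encodes the vertex `p_{uv}`. -/
def consAux (G : SimpleGraph V) [DecidableRel G.Adj] (N : ℕ) :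
    (V ⊕ V ⊕ V) ⊕ G.Dart → (V ⊕ V ⊕ V) ⊕ G.Dart → ℕ
  | Sum.inl (Sum.inl v), Sum.inl (Sum.inr (Sum.inl w)) => if v = w then N else 0
  | Sum.inl (Sum.inr (Sum.inl v)), Sum.inl (Sum.inr (Sum.inr w)) => if v = w then 1 else 0
  | Sum.inl (Sum.inr (Sum.inr v)), Sum.inr d => if d.toProd.1 = v then N else 0
  | Sum.inr d, Sum.inl (Sum.inl v) => if d.toProd.2 = v then 1 else 0
  | _, _ => 0

/-- Edge-multiplicity function of the multigraph `G'` of the standard construction: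
`N` parallel edges between `v_i` and `v_c`, one edge between `v_c` and `v_o`, and,
for each edge `uv` of `G`, `N` parallel edges between `u_o` and `p_{uv}` and one
edge between `p_{uv}` and `v_i`. -/
def consM (G : SimpleGraph V) [DecidableRel G.Adj] (N : ℕ)
    (a b : (V ⊕ V ⊕ V) ⊕ G.Dart) : ℕ :=
  consAux G N a b + consAux G N b a

/-- The divisor `x` of the standard construction: `x(v_i) = d_G(v) + N - τ(v)`,
`x(v_c) = 1`, `x(v_o) = N * d_G(v)`, and `x(p) = 1` for every vertex `p_{uv}`. -/
def consX (G : SimpleGraph V) [DecidableRel G.Adj] (τ : V → ℕ) (N : ℕ) :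
    (V ⊕ V ⊕ V) ⊕ G.Dart → ℤ
  | Sum.inl (Sum.inl v) => (G.degree v : ℤ) + N - τ v
  | Sum.inl (Sum.inr (Sum.inl _)) => 1
  | Sum.inl (Sum.inr (Sum.inr v)) => (N : ℤ) * G.degree v
  | Sum.inr _ => 1

section General

variable (m : V → V → ℕ)

lemma mgPlay_cons (f : V → ℤ) (a : V) (L : List V) :
    mgPlay m f (a :: L) = mgPlay m (mgFire m f a) L := rfl

lemma mgPlay_apply (hdiag : ∀ v, m v v = 0) (f : V → ℤ) (L : List V) (v : V) :
    mgPlay m f L v = f v + ∑ u, (L.count u : ℤ) * m u v - (L.count v : ℤ) * mgDeg m v := by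
  induction L generalizing f with
  | nil => simp [mgPlay]
  | cons a L ih =>
    rw [mgPlay_cons, ih]
    have hcount : ∀ u : V, ((a :: L).count u : ℤ) = (L.count u : ℤ) + if a = u then 1 else 0 := by
      intro u
      rw [List.count_cons]
      split <;> simp_all
    have hsum : ∑ u, ((a :: L).count u : ℤ) * m u v
        = (∑ u, (L.count u : ℤ) * m u v) + m a v := by
      have : ∀ u ∈ Finset.univ, ((a :: L).count u : ℤ) * m u v
          = (L.count u : ℤ) * m u v + (if a = u then (m u v : ℤ) else 0) := by
        intro u _
        rw [hcount]
        split <;> ring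
      rw [Finset.sum_congr rfl this, Finset.sum_add_distrib,
        Finset.sum_ite_eq Finset.univ a (fun u => (m u v : ℤ))]
      simp
    rw [hsum, hcount]
    unfold mgFire
    by_cases h : v = a
    · subst h
      simp [hdiag v]
      ring
    · rw [if_neg (fun hh : a = v => h hh.symm), if_neg h]
      push_cast
      ring

lemma mgLegal_iff (f : V → ℤ) (L : List V) :
    mgLegal m f L ↔ ∀ (j : Fin L.length), (mgDeg m (L.get j) : ℤ) ≤ mgPlay m f (L.take j) (L.get j) := by
  induction L generalizing f with
  | nil => simp [mgLegal]
  | cons a L ih =>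
    show ((mgDeg m a : ℤ) ≤ f a) ∧ mgLegal m (mgFire m f a) L ↔ _
    rw [ih]
    constructor
    · rintro ⟨h0, h1⟩ j
      refine Fin.cases ?_ ?_ j
      · simpa [mgPlay] using h0
      · intro i
        simpa [mgPlay_cons] using h1 i
    · intro h
      refine ⟨by simpa [mgPlay] using h ⟨0, Nat.succ_pos _⟩, fun i => ?_⟩
      simpa [mgPlay_cons] using h i.succ

end General
section General2

variable (m : V → V → ℕ)

/-- From an ordering witness, recurrence. -/
lemma order_to_recurrent [Nonempty V] (hsym : ∀ a b, m a b = m b a)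
    (hdiag : ∀ v, m v v = 0) (f : V → ℤ) (t : V → ℕ) (ht : Function.Injective t)
    (hord : ∀ v, (∑ u, if t v < t u then (m u v : ℤ) else 0) ≤ f v) :
    mgRecurrent m f := by
  classical
  letI r : V → V → Prop := fun a b => t a ≤ t b
  haveI : IsTrans V r := ⟨fun a b c h1 h2 => le_trans h1 h2⟩
  haveI : IsAntisymm V r := ⟨fun a b h1 h2 => ht (le_antisymm h1 h2)⟩
  haveI : IsTotal V r := ⟨fun a b => le_total _ _⟩
  set L : List V := Finset.univ.sort r with hL
  have hnodup : L.Nodup := Finset.sort_nodup _ r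
  have hmem : ∀ v : V, v ∈ L := fun v => (Finset.mem_sort r).2 (Finset.mem_univ v)
  have hsorted : L.Pairwise r := Finset.pairwise_sort _ r
  have hcount1 : ∀ v : V, L.count v = 1 := fun v => List.count_eq_one_of_mem hnodup (hmem v)
  have hdeg : ∀ v, (∑ u, (m u v : ℤ)) = (mgDeg m v : ℤ) := by
    intro v
    rw [mgDeg]
    push_cast
    exact Finset.sum_congr rfl fun u _ => by rw [hsym]
  have hlen : 0 < L.length := by
    have := hmem (Classical.arbitrary V)
    exact List.length_pos_iff.2 (fun h => by simp [h] at this)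
  -- membership in prefixes
  have hget : ∀ (j : Fin L.length), L[(j:ℕ)] = L.get j := fun j => rfl
  have htake : ∀ (j : Fin L.length) (u : V), u ∈ L.take j ↔ t u < t (L.get j) := by
    intro j u
    constructor
    · intro hu
      obtain ⟨i, hi, hg⟩ := List.mem_take_iff_getElem.1 hu
      have hij : i < (j : ℕ) := lt_of_lt_of_le hi inf_le_left
      have hij' : i < L.length := lt_trans hij j.2
      have hr : r (L.get ⟨i, hij'⟩) (L.get j) :=
        List.Pairwise.rel_get_of_lt hsorted (show (⟨i, hij'⟩ : Fin L.length) < j from hij)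
      have hne : L.get ⟨i, hij'⟩ ≠ L.get j := by
        intro hh
        have : i = (j : ℕ) := (List.Nodup.getElem_inj_iff hnodup).1 hh
        omega
      rw [show u = L.get ⟨i, hij'⟩ from hg.symm]
      exact lt_of_le_of_ne hr (fun hh => hne (ht hh))
    · intro hu
      obtain ⟨i, hi, hg⟩ := List.getElem_of_mem (hmem u)
      have hij : i < (j : ℕ) := by
        by_contra hc
        push_neg at hc
        have hr : r (L.get j) (L.get ⟨i, hi⟩) := by
          rcases eq_or_lt_of_le hc with h | h
          · have : L.get ⟨i, hi⟩ = L.get j := by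
              congr 1
              exact Fin.ext h.symm
            rw [this]
          · exact List.Pairwise.rel_get_of_lt hsorted (show j < (⟨i, hi⟩ : Fin L.length) from h)
        rw [show L.get ⟨i, hi⟩ = u from hg] at hr
        exact absurd hu (not_lt.2 hr)
      exact List.mem_take_iff_getElem.2 ⟨i, lt_min hij hi, hg⟩
  have hcnt : ∀ (j : Fin L.length) (u : V),
      ((L.take j).count u : ℤ) = if t u < t (L.get j) then 1 else 0 := by
    intro j u
    by_cases h : t u < t (L.get j)
    · rw [if_pos h]
      have : u ∈ L.take j := (htake j u).2 h
      norm_cast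
      exact List.count_eq_one_of_mem (hnodup.sublist (List.take_sublist _ _)) this
    · rw [if_neg h]
      norm_cast
      exact List.count_eq_zero.2 (fun hc => h ((htake j u).1 hc))
  -- key: value of play on prefixes
  have hplay : ∀ (j : Fin L.length),
      mgPlay m f (L.take j) (L.get j)
        = f (L.get j) + (mgDeg m (L.get j) : ℤ)
          - ∑ u, (if t (L.get j) < t u then (m u (L.get j) : ℤ) else 0) := by
    intro j
    rw [mgPlay_apply m hdiag]
    have hc0 : ((L.take j).count (L.get j) : ℤ) = 0 := by
      rw [hcnt j (L.get j), if_neg (lt_irrefl _)]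
    rw [hc0]
    have hsplit : (∑ u, ((L.take j).count u : ℤ) * m u (L.get j))
        + (∑ u, (if t (L.get j) < t u then (m u (L.get j) : ℤ) else 0))
        = ∑ u, (m u (L.get j) : ℤ) := by
      rw [← Finset.sum_add_distrib]
      refine Finset.sum_congr rfl fun u _ => ?_
      rw [hcnt j u]
      rcases lt_trichotomy (t u) (t (L.get j)) with h | h | h
      · rw [if_pos h, if_neg (by omega)]
        ring
      · rw [if_neg (by omega), if_neg (by omega), ht h, hdiag]
        ring
      · rw [if_neg (by omega), if_pos h]
        ring
    rw [hdeg] at hsplit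
    linarith
  refine ⟨L, fun h => by simp [h] at hlen, ?_, ?_⟩
  · rw [mgLegal_iff]
    intro j
    rw [hplay j]
    have := hord (L.get j)
    linarith
  · funext v
    rw [mgPlay_apply m hdiag, hcount1 v]
    have : ∀ u ∈ Finset.univ, (L.count u : ℤ) * m u v = (m u v : ℤ) := by
      intro u _
      rw [hcount1 u]
      ring
    rw [Finset.sum_congr rfl this, hdeg]
    ring

end General2
lemma not_mem_take_indexOf {α : Type*} [DecidableEq α] (l : List α) (a : α) :
    a ∉ l.take (l.idxOf a) := by
  induction l with
  | nil => simp
  | cons b l ih =>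
    by_cases h : b = a
    · simp [List.idxOf_cons_eq _ h]
    · rw [List.idxOf_cons_ne _ h]
      simp only [List.take_succ_cons, List.mem_cons]
      rintro (rfl | hmem)
      · exact h rfl
      · exact ih hmem
section General3

variable (m : V → V → ℕ)

/-- From recurrence, an ordering witness. -/
lemma recurrent_to_order [Nonempty V] (hsym : ∀ a b, m a b = m b a)
    (hdiag : ∀ v, m v v = 0) (hconn : mgConnected m) (f : V → ℤ)
    (hrec : mgRecurrent m f) :
    ∃ t : V → ℕ, Function.Injective t ∧
      ∀ v, (∑ u, if t v < t u then (m u v : ℤ) else 0) ≤ f v := by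
  classical
  obtain ⟨L, hLne, hleg, hply⟩ := hrec
  have hdeg : ∀ v, (∑ u, (m u v : ℤ)) = (mgDeg m v : ℤ) := by
    intro v
    rw [mgDeg]
    push_cast
    exact Finset.sum_congr rfl fun u _ => by rw [hsym]
  -- balance equations
  have hbal : ∀ v, (∑ u, (L.count u : ℤ) * m u v) = (L.count v : ℤ) * mgDeg m v := by
    intro v
    have := congrFun hply v
    rw [mgPlay_apply m hdiag] at this
    linarith
  -- counts are constant
  set M : ℕ := Finset.univ.sup L.count with hM
  have hle : ∀ v, L.count v ≤ M := fun v => Finset.le_sup (f := L.count) (Finset.mem_univ v)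
  have hstep : ∀ a b, 0 < m a b → L.count a = M → L.count b = M := by
    intro a b hm hca
    have hsum0 : (∑ u, ((M : ℤ) - L.count u) * m u a) = 0 := by
      have h1 : (∑ u, ((M : ℤ)) * m u a) = (M : ℤ) * mgDeg m a := by
        rw [← Finset.mul_sum, hdeg]
      have hexp : ∀ u ∈ Finset.univ, ((M : ℤ) - L.count u) * m u a
          = (M:ℤ) * m u a - (L.count u : ℤ) * m u a := fun u _ => by ring
      rw [Finset.sum_congr rfl hexp, Finset.sum_sub_distrib, h1, hbal a, hca]
      ring
    have hnn : ∀ u ∈ Finset.univ, (0:ℤ) ≤ ((M : ℤ) - L.count u) * m u a := by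
      intro u _
      have := hle u
      exact mul_nonneg (sub_nonneg.2 (by exact_mod_cast this)) (by positivity)
    have := (Finset.sum_eq_zero_iff_of_nonneg hnn).1 hsum0 b (Finset.mem_univ b)
    have hmba : 0 < m b a := by rw [hsym]; exact hm
    have : ((M : ℤ) - L.count b) = 0 := by
      rcases mul_eq_zero.1 this with h | h
      · exact h
      · exfalso
        have : (m b a : ℤ) ≠ 0 := by exact_mod_cast Nat.pos_iff_ne_zero.1 hmba
        exact this h
    have := hle b
    omega
  have hconst : ∀ v, L.count v = M := by
    obtain ⟨v0, -, hv0⟩ := Finset.exists_mem_eq_sup Finset.univ Finset.univ_nonempty L.count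
    intro v
    have h0 : L.count v0 = M := hv0.symm
    have hpath := hconn v0 v
    induction hpath with
    | refl => exact h0
    | tail _ hab ih => exact hstep _ _ hab ih
  have hM1 : 1 ≤ M := by
    obtain ⟨a, L', rfl⟩ := List.exists_cons_of_ne_nil hLne
    have : 0 < (a :: L').count a := List.count_pos_iff.2 List.mem_cons_self
    have := hle a
    omega
  -- last occurrence positions, via the reversed list
  set R : List V := L.reverse with hR
  have hmemR : ∀ v : V, v ∈ R := by
    intro v
    rw [hR, List.mem_reverse]
    have : 0 < L.count v := by rw [hconst v]; omega
    exact List.count_pos_iff.1 this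
  set rid : V → ℕ := fun v => R.idxOf v with hrid
  have hridlt : ∀ v, rid v < L.length := by
    intro v
    have := List.idxOf_lt_length_iff.2 (hmemR v)
    simpa [hR] using this
  have hgetrid : ∀ v, R.get ⟨rid v, by simpa [hR] using hridlt v⟩ = v :=
    fun v => List.idxOf_get _
  refine ⟨fun v => L.length - 1 - rid v, ?_, ?_⟩
  · intro u v huv
    have hu := hridlt u
    have hv := hridlt v
    have huv' : L.length - 1 - rid u = L.length - 1 - rid v := huv
    have hru : rid u = rid v := by omega
    calc u = R.get ⟨rid u, by simpa [hR] using hu⟩ := (hgetrid u).symm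
      _ = R.get ⟨rid v, by simpa [hR] using hv⟩ := by
          congr 1
          exact Fin.ext hru
      _ = v := hgetrid v
  · intro v
    set k : ℕ := rid v with hk
    have hkl : k < L.length := hridlt v
    set j : ℕ := L.length - 1 - k with hj
    have hjl : j < L.length := by omega
    have hRlen : R.length = L.length := by simp [hR]
    have hLv : L[j]'hjl = v := by
      have h1 : L.reverse[k]'(by simpa using hkl) = v := hgetrid v
      rw [List.getElem_reverse] at h1
      exact h1
    -- counts in the prefix
    have htakerev : L.take j = (R.drop (k+1)).reverse := by
      have h1 : (L.take j).reverse = L.reverse.drop (L.length - j) := List.reverse_take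
      have h2 : L.length - j = k + 1 := by omega
      rw [h2] at h1
      rw [← hR] at h1
      rw [← h1, List.reverse_reverse]
    have hcnt_eq : ∀ u, (L.take j).count u = (R.drop (k+1)).count u := by
      intro u
      rw [htakerev, List.count_reverse]
    have hsplitR : ∀ u, (R.take (k+1)).count u + (R.drop (k+1)).count u = M := by
      intro u
      rw [← List.count_append, List.take_append_drop]
      rw [hR, List.count_reverse]
      exact hconst u
    have hcv : (L.take j).count v = M - 1 := by
      have h1 : (R.take (k+1)).count v = 1 := by
        rw [List.take_succ]
        have h2 : R[k]? = some v := by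
          rw [List.getElem?_eq_getElem (by omega)]
          congr 1
          have := hgetrid v
          simpa using this
        rw [h2, List.count_append]
        have h3 : (R.take k).count v = 0 :=
          List.count_eq_zero.2 (not_mem_take_indexOf R v)
        simp [h3]
      have := hsplitR v
      rw [hcnt_eq v]
      omega
    have hcu_le : ∀ u, (L.take j).count u ≤ M := by
      intro u
      have := hsplitR u
      rw [hcnt_eq u]
      omega
    have hcu_lt : ∀ u, rid u < k → (L.take j).count u ≤ M - 1 := by
      intro u hu
      have hmemtake : u ∈ R.take (k+1) := by
        refine List.mem_take_iff_getElem.2 ⟨rid u, lt_min (by omega) (by rw [hRlen]; exact hridlt u), ?_⟩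
        have := hgetrid u
        simpa using this
      have h1 : 0 < (R.take (k+1)).count u := List.count_pos_iff.2 hmemtake
      have := hsplitR u
      rw [hcnt_eq u]
      omega
    -- legality at position j
    have hlegal := (mgLegal_iff m f L).1 hleg ⟨j, hjl⟩
    have hget : L.get ⟨j, hjl⟩ = v := hLv
    rw [hget, mgPlay_apply m hdiag] at hlegal
    rw [hcv] at hlegal
    have hMpos : (1:ℤ) ≤ (M:ℤ) := by exact_mod_cast hM1
    have hcast : ((M - 1 : ℕ) : ℤ) = (M:ℤ) - 1 := by
      have := hM1
      omega
    rw [hcast] at hlegal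
    -- bound the sum
    have hsum_le : (∑ u, ((L.take j).count u : ℤ) * m u v)
        ≤ (M:ℤ) * mgDeg m v - ∑ u, (if L.length - 1 - rid v < L.length - 1 - rid u then (m u v : ℤ) else 0) := by
      have hpt : ∀ u ∈ Finset.univ, ((L.take j).count u : ℤ) * m u v
          ≤ ((M:ℤ) - if L.length - 1 - rid v < L.length - 1 - rid u then 1 else 0) * m u v := by
        intro u _
        refine mul_le_mul_of_nonneg_right ?_ (by positivity)
        by_cases h : L.length - 1 - rid v < L.length - 1 - rid u
        · rw [if_pos h]
          have hru : rid u < k := by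
            have h1 := hridlt u
            have h2 := hridlt v
            omega
          have := hcu_lt u hru
          have := hM1
          push_cast
          omega
        · rw [if_neg h]
          have := hcu_le u
          push_cast
          omega
      calc (∑ u, ((L.take j).count u : ℤ) * m u v)
          ≤ ∑ u, ((M:ℤ) - if L.length - 1 - rid v < L.length - 1 - rid u then 1 else 0) * m u v :=
            Finset.sum_le_sum hpt
        _ = (M:ℤ) * mgDeg m v - ∑ u, (if L.length - 1 - rid v < L.length - 1 - rid u then (m u v : ℤ) else 0) := by
            rw [← hdeg v, Finset.mul_sum, ← Finset.sum_sub_distrib]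
            refine Finset.sum_congr rfl fun u _ => ?_
            split <;> ring
    linarith

end General3
section Cons

variable (G : SimpleGraph V) [DecidableRel G.Adj] (N : ℕ)

lemma consM_comm (a b : (V ⊕ V ⊕ V) ⊕ G.Dart) : consM G N a b = consM G N b a := by
  unfold consM
  omega

lemma consM_self (a : (V ⊕ V ⊕ V) ⊕ G.Dart) : consM G N a a = 0 := by
  rcases a with (v | v | v) | d <;> rfl

/-- Sum decomposition over the vertex type of the construction. -/
lemma consSum (φ : ((V ⊕ V ⊕ V) ⊕ G.Dart) → ℤ) :
    ∑ a, φ a = (∑ v, φ (Sum.inl (Sum.inl v))) + (∑ v, φ (Sum.inl (Sum.inr (Sum.inl v))))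
      + (∑ v, φ (Sum.inl (Sum.inr (Sum.inr v)))) + (∑ d, φ (Sum.inr d)) := by
  rw [Fintype.sum_sum_type, Fintype.sum_sum_type, Fintype.sum_sum_type]
  ring

variable (t : ((V ⊕ V ⊕ V) ⊕ G.Dart) → ℕ)

lemma consSin_i (v : V) :
    (∑ a, if t (Sum.inl (Sum.inl v)) < t a then (consM G N a (Sum.inl (Sum.inl v)) : ℤ) else 0)
      = (if t (Sum.inl (Sum.inl v)) < t (Sum.inl (Sum.inr (Sum.inl v))) then (N : ℤ) else 0)
        + ∑ d ∈ Finset.univ.filter (fun d : G.Dart => d.toProd.2 = v),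
            (if t (Sum.inl (Sum.inl v)) < t (Sum.inr d) then 1 else 0) := by
  rw [consSum]
  have h1 : (∑ w, if t (Sum.inl (Sum.inl v)) < t (Sum.inl (Sum.inl w))
      then (consM G N (Sum.inl (Sum.inl w)) (Sum.inl (Sum.inl v)) : ℤ) else 0) = 0 :=
    Finset.sum_eq_zero fun w _ => by simp [consM, consAux]
  have h2 : (∑ w, if t (Sum.inl (Sum.inl v)) < t (Sum.inl (Sum.inr (Sum.inl w)))
      then (consM G N (Sum.inl (Sum.inr (Sum.inl w))) (Sum.inl (Sum.inl v)) : ℤ) else 0)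
      = (if t (Sum.inl (Sum.inl v)) < t (Sum.inl (Sum.inr (Sum.inl v))) then (N : ℤ) else 0) := by
    rw [Fintype.sum_eq_single v]
    · simp [consM, consAux]
    · intro w hw
      simp [consM, consAux, hw, Ne.symm hw]
  have h3 : (∑ w, if t (Sum.inl (Sum.inl v)) < t (Sum.inl (Sum.inr (Sum.inr w)))
      then (consM G N (Sum.inl (Sum.inr (Sum.inr w))) (Sum.inl (Sum.inl v)) : ℤ) else 0) = 0 :=
    Finset.sum_eq_zero fun w _ => by simp [consM, consAux]
  have h4 : (∑ d : G.Dart, if t (Sum.inl (Sum.inl v)) < t (Sum.inr d)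
      then (consM G N (Sum.inr d) (Sum.inl (Sum.inl v)) : ℤ) else 0)
      = ∑ d ∈ Finset.univ.filter (fun d : G.Dart => d.toProd.2 = v),
          (if t (Sum.inl (Sum.inl v)) < t (Sum.inr d) then 1 else 0) := by
    rw [Finset.sum_filter]
    refine Finset.sum_congr rfl fun d _ => ?_
    by_cases h : d.toProd.2 = v
    · simp [consM, consAux, h]
    · simp [consM, consAux, h]
  rw [h1, h2, h3, h4]
  ring

lemma consSin_c (v : V) :
    (∑ a, if t (Sum.inl (Sum.inr (Sum.inl v))) < t a
        then (consM G N a (Sum.inl (Sum.inr (Sum.inl v))) : ℤ) else 0)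
      = (if t (Sum.inl (Sum.inr (Sum.inl v))) < t (Sum.inl (Sum.inl v)) then (N : ℤ) else 0)
        + (if t (Sum.inl (Sum.inr (Sum.inl v))) < t (Sum.inl (Sum.inr (Sum.inr v))) then 1 else 0) := by
  rw [consSum]
  have h1 : (∑ w, if t (Sum.inl (Sum.inr (Sum.inl v))) < t (Sum.inl (Sum.inl w))
      then (consM G N (Sum.inl (Sum.inl w)) (Sum.inl (Sum.inr (Sum.inl v))) : ℤ) else 0)
      = (if t (Sum.inl (Sum.inr (Sum.inl v))) < t (Sum.inl (Sum.inl v)) then (N : ℤ) else 0) := by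
    rw [Fintype.sum_eq_single v]
    · simp [consM, consAux]
    · intro w hw
      simp [consM, consAux, hw, Ne.symm hw]
  have h2 : (∑ w, if t (Sum.inl (Sum.inr (Sum.inl v))) < t (Sum.inl (Sum.inr (Sum.inl w)))
      then (consM G N (Sum.inl (Sum.inr (Sum.inl w))) (Sum.inl (Sum.inr (Sum.inl v))) : ℤ) else 0) = 0 :=
    Finset.sum_eq_zero fun w _ => by simp [consM, consAux]
  have h3 : (∑ w, if t (Sum.inl (Sum.inr (Sum.inl v))) < t (Sum.inl (Sum.inr (Sum.inr w)))
      then (consM G N (Sum.inl (Sum.inr (Sum.inr w))) (Sum.inl (Sum.inr (Sum.inl v))) : ℤ) else 0)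
      = (if t (Sum.inl (Sum.inr (Sum.inl v))) < t (Sum.inl (Sum.inr (Sum.inr v))) then 1 else 0) := by
    rw [Fintype.sum_eq_single v]
    · simp [consM, consAux]
    · intro w hw
      simp [consM, consAux, hw, Ne.symm hw]
  have h4 : (∑ d : G.Dart, if t (Sum.inl (Sum.inr (Sum.inl v))) < t (Sum.inr d)
      then (consM G N (Sum.inr d) (Sum.inl (Sum.inr (Sum.inl v))) : ℤ) else 0) = 0 :=
    Finset.sum_eq_zero fun d _ => by simp [consM, consAux]
  rw [h1, h2, h3, h4]
  ring

lemma consSin_o (v : V) :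
    (∑ a, if t (Sum.inl (Sum.inr (Sum.inr v))) < t a
        then (consM G N a (Sum.inl (Sum.inr (Sum.inr v))) : ℤ) else 0)
      = (if t (Sum.inl (Sum.inr (Sum.inr v))) < t (Sum.inl (Sum.inr (Sum.inl v))) then 1 else 0)
        + ∑ d ∈ Finset.univ.filter (fun d : G.Dart => d.toProd.1 = v),
            (if t (Sum.inl (Sum.inr (Sum.inr v))) < t (Sum.inr d) then (N : ℤ) else 0) := by
  rw [consSum]
  have h1 : (∑ w, if t (Sum.inl (Sum.inr (Sum.inr v))) < t (Sum.inl (Sum.inl w))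
      then (consM G N (Sum.inl (Sum.inl w)) (Sum.inl (Sum.inr (Sum.inr v))) : ℤ) else 0) = 0 :=
    Finset.sum_eq_zero fun w _ => by simp [consM, consAux]
  have h2 : (∑ w, if t (Sum.inl (Sum.inr (Sum.inr v))) < t (Sum.inl (Sum.inr (Sum.inl w)))
      then (consM G N (Sum.inl (Sum.inr (Sum.inl w))) (Sum.inl (Sum.inr (Sum.inr v))) : ℤ) else 0)
      = (if t (Sum.inl (Sum.inr (Sum.inr v))) < t (Sum.inl (Sum.inr (Sum.inl v))) then 1 else 0) := by
    rw [Fintype.sum_eq_single v]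
    · simp [consM, consAux]
    · intro w hw
      simp [consM, consAux, hw, Ne.symm hw]
  have h3 : (∑ w, if t (Sum.inl (Sum.inr (Sum.inr v))) < t (Sum.inl (Sum.inr (Sum.inr w)))
      then (consM G N (Sum.inl (Sum.inr (Sum.inr w))) (Sum.inl (Sum.inr (Sum.inr v))) : ℤ) else 0) = 0 :=
    Finset.sum_eq_zero fun w _ => by simp [consM, consAux]
  have h4 : (∑ d : G.Dart, if t (Sum.inl (Sum.inr (Sum.inr v))) < t (Sum.inr d)
      then (consM G N (Sum.inr d) (Sum.inl (Sum.inr (Sum.inr v))) : ℤ) else 0)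
      = ∑ d ∈ Finset.univ.filter (fun d : G.Dart => d.toProd.1 = v),
          (if t (Sum.inl (Sum.inr (Sum.inr v))) < t (Sum.inr d) then (N : ℤ) else 0) := by
    rw [Finset.sum_filter]
    refine Finset.sum_congr rfl fun d _ => ?_
    by_cases h : d.toProd.1 = v
    · simp [consM, consAux, h]
    · simp [consM, consAux, h]
  rw [h1, h2, h3, h4]
  ring

lemma consSin_p (d : G.Dart) :
    (∑ a, if t (Sum.inr d) < t a then (consM G N a (Sum.inr d) : ℤ) else 0)
      = (if t (Sum.inr d) < t (Sum.inl (Sum.inr (Sum.inr d.toProd.1))) then (N : ℤ) else 0)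
        + (if t (Sum.inr d) < t (Sum.inl (Sum.inl d.toProd.2)) then 1 else 0) := by
  rw [consSum]
  have h1 : (∑ w, if t (Sum.inr d) < t (Sum.inl (Sum.inl w))
      then (consM G N (Sum.inl (Sum.inl w)) (Sum.inr d) : ℤ) else 0)
      = (if t (Sum.inr d) < t (Sum.inl (Sum.inl d.toProd.2)) then 1 else 0) := by
    rw [Fintype.sum_eq_single d.toProd.2]
    · simp [consM, consAux]
    · intro w hw
      simp [consM, consAux, hw, Ne.symm hw]
  have h2 : (∑ w, if t (Sum.inr d) < t (Sum.inl (Sum.inr (Sum.inl w)))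
      then (consM G N (Sum.inl (Sum.inr (Sum.inl w))) (Sum.inr d) : ℤ) else 0) = 0 :=
    Finset.sum_eq_zero fun w _ => by simp [consM, consAux]
  have h3 : (∑ w, if t (Sum.inr d) < t (Sum.inl (Sum.inr (Sum.inr w)))
      then (consM G N (Sum.inl (Sum.inr (Sum.inr w))) (Sum.inr d) : ℤ) else 0)
      = (if t (Sum.inr d) < t (Sum.inl (Sum.inr (Sum.inr d.toProd.1))) then (N : ℤ) else 0) := by
    rw [Fintype.sum_eq_single d.toProd.1]
    · simp [consM, consAux]
    · intro w hw
      simp [consM, consAux, hw, Ne.symm hw]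
  have h4 : (∑ e : G.Dart, if t (Sum.inr d) < t (Sum.inr e)
      then (consM G N (Sum.inr e) (Sum.inr d) : ℤ) else 0) = 0 :=
    Finset.sum_eq_zero fun e _ => by simp [consM, consAux]
  rw [h1, h2, h3, h4]
  ring

lemma consCard_snd (v : V) :
    (Finset.univ.filter (fun d : G.Dart => d.toProd.2 = v)).card = G.degree v := by
  rw [← SimpleGraph.dart_fst_fiber_card_eq_degree]
  apply Finset.card_bij (fun d _ => d.symm)
  · intro a ha
    simp only [Finset.mem_filter, Finset.mem_univ, true_and] at ha ⊢
    exact ha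
  · intro a _ b _ hab
    exact SimpleGraph.Dart.symm_involutive.injective hab
  · intro b hb
    simp only [Finset.mem_filter, Finset.mem_univ, true_and] at hb
    exact ⟨b.symm, by simp only [Finset.mem_filter, Finset.mem_univ, true_and]; exact hb, by simp⟩

lemma consCard_fst (v : V) :
    (Finset.univ.filter (fun d : G.Dart => d.toProd.1 = v)).card = G.degree v :=
  SimpleGraph.dart_fst_fiber_card_eq_degree G v

lemma consConnected (hG : G.Connected) (hN : 0 < N) : mgConnected (consM G N) := by
  set rel : ((V ⊕ V ⊕ V) ⊕ G.Dart) → ((V ⊕ V ⊕ V) ⊕ G.Dart) → Prop :=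
    fun a b => 0 < consM G N a b with hrel
  have hsymm : Symmetric rel := by
    intro a b h
    rw [hrel] at h ⊢
    show 0 < consM G N b a
    rwa [consM_comm]
  have hRTGsymm : Symmetric (Relation.ReflTransGen rel) := by
    haveI : Std.Symm rel := ⟨fun a b h => hsymm h⟩
    exact fun a b h => Std.Symm.symm a b h
  have hic : ∀ v : V, rel (Sum.inl (Sum.inl v)) (Sum.inl (Sum.inr (Sum.inl v))) := by
    intro v
    simp [hrel, consM, consAux, hN]
  have hco : ∀ v : V, rel (Sum.inl (Sum.inr (Sum.inl v))) (Sum.inl (Sum.inr (Sum.inr v))) := by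
    intro v
    simp [hrel, consM, consAux]
  have hop : ∀ d : G.Dart, rel (Sum.inl (Sum.inr (Sum.inr d.toProd.1))) (Sum.inr d) := by
    intro d
    simp [hrel, consM, consAux, hN]
  have hpi : ∀ d : G.Dart, rel (Sum.inr d) (Sum.inl (Sum.inl d.toProd.2)) := by
    intro d
    simp [hrel, consM, consAux]
  have hii : ∀ v w : V, G.Adj v w →
      Relation.ReflTransGen rel (Sum.inl (Sum.inl v)) (Sum.inl (Sum.inl w)) := by
    intro v w hvw
    have hd : rel (Sum.inl (Sum.inr (Sum.inr v))) (Sum.inr (SimpleGraph.Dart.mk (v, w) hvw)) :=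
      hop (SimpleGraph.Dart.mk (v, w) hvw)
    have hd2 : rel (Sum.inr (SimpleGraph.Dart.mk (v, w) hvw)) (Sum.inl (Sum.inl w)) :=
      hpi (SimpleGraph.Dart.mk (v, w) hvw)
    exact .trans (.single (hic v)) (.trans (.single (hco v)) (.trans (.single hd) (.single hd2)))
  have hwalk : ∀ {v w : V}, G.Walk v w →
      Relation.ReflTransGen rel (Sum.inl (Sum.inl v)) (Sum.inl (Sum.inl w)) := by
    intro v w p
    induction p with
    | nil => exact .refl
    | cons h _ ih => exact .trans (hii _ _ h) ih
  have hub : ∀ a : (V ⊕ V ⊕ V) ⊕ G.Dart, ∃ v : V,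
      Relation.ReflTransGen rel a (Sum.inl (Sum.inl v)) := by
    rintro ((v | v | v) | d)
    · exact ⟨v, .refl⟩
    · exact ⟨v, hRTGsymm (.single (hic v))⟩
    · exact ⟨v, .trans (hRTGsymm (.single (hco v))) (hRTGsymm (.single (hic v)))⟩
    · exact ⟨d.toProd.2, .single (hpi d)⟩
  intro a b
  obtain ⟨va, ha⟩ := hub a
  obtain ⟨vb, hb⟩ := hub b
  obtain ⟨p⟩ := hG.preconnected va vb
  exact .trans ha (.trans (hwalk p) (hRTGsymm hb))

end Cons

section Tss

variable (G : SimpleGraph V) [DecidableRel G.Adj] (τ : V → ℕ)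

lemma tssStep_subset (A : Finset V) : A ⊆ tssStep G τ A := Finset.subset_union_left

lemma tssStep_mono {A B : Finset V} (h : A ⊆ B) : tssStep G τ A ⊆ tssStep G τ B := by
  unfold tssStep
  refine Finset.union_subset_union h (Finset.monotone_filter_right _ ?_)
  intro v _ hv
  refine le_trans hv (Finset.card_le_card ?_)
  intro u hu
  rw [Finset.mem_filter] at hu ⊢
  exact ⟨h hu.1, hu.2⟩

lemma tssIter_subset (S : Finset V) (j k : ℕ) (h : j ≤ k) :
    (tssStep G τ)^[j] S ⊆ (tssStep G τ)^[k] S := by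
  induction k with
  | zero => simpa [Nat.le_zero.1 h] using Finset.Subset.refl _
  | succ k ih =>
    rcases Nat.lt_or_ge j (k+1) with hlt | hge
    · refine (ih (by omega)).trans ?_
      rw [Function.iterate_succ_apply']
      exact tssStep_subset G τ _
    · have : j = k + 1 := by omega
      subst this
      exact Finset.Subset.refl _

end Tss
/-- `ts_G(τ) = dist_rec_{G'}(x)` for the standard construction (on a connected
simple graph `G`) with `N = |V| + 2`. -/
theorem stmt11 [Nonempty V] (G : SimpleGraph V) [DecidableRel G.Adj]
    (hconn : G.Connected) (τ : V → ℕ) (hτ : ∀ v, τ v ≤ G.degree v) :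
    tssMin G τ =
      mgDistRec (consM G (Fintype.card V + 2)) (consX G τ (Fintype.card V + 2)) := by
  classical
  set N : ℕ := Fintype.card V + 2 with hNdef
  have hN2 : 2 ≤ N := by omega
  set m' := consM G N with hm'
  set x := consX G τ N with hx
  have hsym : ∀ a b, m' a b = m' b a := consM_comm G N
  have hdiag : ∀ a, m' a a = 0 := consM_self G N
  have hmconn : mgConnected m' := consConnected G N hconn (by omega)
  haveI hne' : Nonempty ((V ⊕ V ⊕ V) ⊕ G.Dart) := ⟨Sum.inl (Sum.inl (Classical.arbitrary V))⟩
  -- =========================== upper bound ===========================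
  have hTne : {k : ℕ | ∃ S : Finset V, tssIsTargetSet G τ S ∧ S.card = k}.Nonempty :=
    ⟨(Finset.univ : Finset V).card, Finset.univ, ⟨0, rfl⟩, rfl⟩
  have hSmem : tssMin G τ ∈ {k : ℕ | ∃ S : Finset V, tssIsTargetSet G τ S ∧ S.card = k} :=
    Nat.sInf_mem hTne
  obtain ⟨S, hStgt, hScard⟩ := hSmem
  obtain ⟨T, hT⟩ := hStgt
  set A : ℕ → Finset V := fun j => (tssStep G τ)^[j] S with hA
  have hA0 : A 0 = S := rfl
  have hAmono : ∀ j k, j ≤ k → A j ⊆ A k := fun j k h => tssIter_subset G τ S j k h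
  have hAsucc : ∀ j, A (j+1) = tssStep G τ (A j) := fun j => Function.iterate_succ_apply' _ _ _
  set r : V → ℕ := fun v => sInf {j | v ∈ A j} with hr
  have hrmem : ∀ v, v ∈ A (r v) := by
    intro v
    have h : sInf {j | v ∈ A j} ∈ {j | v ∈ A j} :=
      Nat.sInf_mem ⟨T, show v ∈ A T by rw [show A T = Finset.univ from hT]; exact Finset.mem_univ v⟩
    exact h
  have hrle : ∀ v, r v ≤ T := fun v =>
    Nat.sInf_le (show v ∈ A T by rw [show A T = Finset.univ from hT]; exact Finset.mem_univ v)
  have hrS : ∀ v ∈ S, r v = 0 := fun v hv => Nat.le_zero.1 (Nat.sInf_le (show v ∈ A 0 from hv))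
  have hr_le : ∀ v j, v ∈ A j ↔ r v ≤ j := by
    intro v j
    constructor
    · intro h
      exact Nat.sInf_le h
    · intro h
      exact hAmono _ _ h (hrmem v)
  have hrpos : ∀ v, v ∉ S → 1 ≤ r v := by
    intro v hv
    by_contra h
    push_neg at h
    have h0 : r v = 0 := by omega
    have h1 := hrmem v
    rw [h0, hA0] at h1
    exact hv h1
  have hract : ∀ v, v ∉ S → τ v ≤ ((A (r v - 1)).filter (fun u => G.Adj v u)).card := by
    intro v hv
    have h1 : 1 ≤ r v := hrpos v hv
    have hnot : v ∉ A (r v - 1) := by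
      intro hmem
      have := (hr_le v (r v - 1)).1 hmem
      omega
    have hmem : v ∈ tssStep G τ (A (r v - 1)) := by
      have : r v = (r v - 1) + 1 := by omega
      have h2 := hrmem v
      rw [this, hAsucc] at h2
      exact h2
    unfold tssStep at hmem
    rcases Finset.mem_union.1 hmem with h | h
    · exact absurd h hnot
    · exact (Finset.mem_filter.1 h).2
  -- the priority function
  set K : ℕ := Fintype.card ((V ⊕ V ⊕ V) ⊕ G.Dart) with hK
  have hKpos : 0 < K := Fintype.card_pos
  set en : ((V ⊕ V ⊕ V) ⊕ G.Dart) → ℕ := fun z => ((Fintype.equivFin _) z : ℕ) with hen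
  have hen_lt : ∀ z, en z < K := fun z => (Fintype.equivFin _ z).2
  have hen_inj : Function.Injective en := fun a b h =>
    (Fintype.equivFin _).injective (Fin.ext h)
  set stage : ((V ⊕ V ⊕ V) ⊕ G.Dart) → ℕ :=
    Sum.elim
      (Sum.elim (fun v => if v ∈ S then 4*T+5 else 4*(r v)+1)
        (Sum.elim (fun v => if v ∈ S then 4*T+6 else 4*(r v)+2)
          (fun v => if v ∈ S then 1 else 4*(r v)+3)))
      (fun d => if d.toProd.1 ∈ S then 2 else 4*(r d.toProd.1)+4) with hstage
  set t : ((V ⊕ V ⊕ V) ⊕ G.Dart) → ℕ := fun z => stage z * K + en z with htdef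
  have htinj : Function.Injective t := by
    intro a b h
    have h1 : stage a * K + en a = stage b * K + en b := h
    have h1' : en a + stage a * K = en b + stage b * K := by omega
    have h2 : (en a + stage a * K) % K = (en b + stage b * K) % K := by rw [h1']
    rw [Nat.add_mul_mod_self_right, Nat.add_mul_mod_self_right,
      Nat.mod_eq_of_lt (hen_lt a), Nat.mod_eq_of_lt (hen_lt b)] at h2
    exact hen_inj h2
  have hstage_t : ∀ a b, stage a < stage b → t a < t b := by
    intro a b h
    have e1 := hen_lt a
    have e2 : (stage a + 1) * K ≤ stage b * K := Nat.mul_le_mul_right K h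
    have e3 : (stage a + 1) * K = stage a * K + K := by ring
    show stage a * K + en a < stage b * K + en b
    omega
  -- the extra divisor
  set g : ((V ⊕ V ⊕ V) ⊕ G.Dart) → ℤ :=
    Sum.elim
      (Sum.elim (fun _ => 0)
        (Sum.elim (fun _ => 0) (fun v => if v ∈ S then 1 else 0)))
      (fun _ => 0) with hg
  have hgeff : mgEffective g := by
    rintro ((v | v | v) | d) <;> simp [hg] <;> split <;> norm_num
  have hgdeg : mgDegDiv g = (S.card : ℤ) := by
    unfold mgDegDiv
    rw [consSum G g]
    have h1 : (∑ v : V, g (Sum.inl (Sum.inl v))) = 0 := Finset.sum_eq_zero fun v _ => rfl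
    have h2 : (∑ v : V, g (Sum.inl (Sum.inr (Sum.inl v)))) = 0 := Finset.sum_eq_zero fun v _ => rfl
    have h3 : (∑ d : G.Dart, g (Sum.inr d)) = 0 := Finset.sum_eq_zero fun d _ => rfl
    have h4 : (∑ v : V, g (Sum.inl (Sum.inr (Sum.inr v)))) = (S.card : ℤ) := by
      have : ∀ v : V, g (Sum.inl (Sum.inr (Sum.inr v))) = if v ∈ S then (1:ℤ) else 0 :=
        fun v => rfl
      rw [Finset.sum_congr rfl fun v _ => this v, Finset.sum_ite_mem]
      simp
    rw [h1, h2, h3, h4]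
    ring
  have hstage_i : ∀ v : V, stage (Sum.inl (Sum.inl v)) = if v ∈ S then 4*T+5 else 4*(r v)+1 :=
    fun v => rfl
  have hstage_c : ∀ v : V, stage (Sum.inl (Sum.inr (Sum.inl v))) = if v ∈ S then 4*T+6 else 4*(r v)+2 :=
    fun v => rfl
  have hstage_o : ∀ v : V, stage (Sum.inl (Sum.inr (Sum.inr v))) = if v ∈ S then 1 else 4*(r v)+3 :=
    fun v => rfl
  have hstage_p : ∀ d : G.Dart, stage (Sum.inr d) = if d.toProd.1 ∈ S then 2 else 4*(r d.toProd.1)+4 :=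
    fun d => rfl
  have hcard_eq : ∀ (v : V) (A' : Finset V),
      ((Finset.univ.filter (fun d : G.Dart => d.toProd.2 = v)).filter
          (fun d => d.toProd.1 ∈ A')).card = (A'.filter (fun u => G.Adj v u)).card := by
    intro v A'
    refine Finset.card_bij (fun d _ => d.toProd.1) ?_ ?_ ?_
    · intro d hd
      simp only [Finset.mem_filter, Finset.mem_univ, true_and] at hd ⊢
      refine ⟨hd.2, ?_⟩
      have := d.adj
      rw [hd.1] at this
      exact this.symm
    · intro a ha b hb hab
      simp only [Finset.mem_filter, Finset.mem_univ, true_and] at ha hb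
      apply SimpleGraph.Dart.ext
      exact Prod.ext hab (ha.1.trans hb.1.symm)
    · intro u hu
      simp only [Finset.mem_filter] at hu
      refine ⟨SimpleGraph.Dart.mk (u, v) hu.2.symm, ?_, rfl⟩
      simp only [Finset.mem_filter, Finset.mem_univ, true_and]
      exact hu.1
  have hordU : ∀ z, (∑ a, if t z < t a then (m' a z : ℤ) else 0) ≤ (x + g) z := by
    rintro ((v | v | v) | d)
    · -- z = v_i
      rw [hm', consSin_i G N t v]
      have hxg : (x + g) (Sum.inl (Sum.inl v)) = (G.degree v : ℤ) + N - τ v := by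
        show x _ + g _ = _
        show ((G.degree v : ℤ) + N - τ v) + 0 = _
        ring
      rw [hxg]
      have hterm1 : (if t (Sum.inl (Sum.inl v)) < t (Sum.inl (Sum.inr (Sum.inl v)))
          then (N:ℤ) else 0) ≤ N := by
        split
        · exact le_refl _
        · positivity
      by_cases hvS : v ∈ S
      · have hdarts : (∑ d ∈ Finset.univ.filter (fun d : G.Dart => d.toProd.2 = v),
            (if t (Sum.inl (Sum.inl v)) < t (Sum.inr d) then (1:ℤ) else 0)) = 0 := by
          refine Finset.sum_eq_zero fun d _ => ?_
          rw [if_neg]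
          intro hlt
          have hst : stage (Sum.inr d) < stage (Sum.inl (Sum.inl v)) := by
            rw [hstage_p, hstage_i, if_pos hvS]
            have := hrle d.toProd.1
            split <;> omega
          have := hstage_t _ _ hst
          omega
        rw [hdarts]
        have hcast : (τ v : ℤ) ≤ (G.degree v : ℤ) := by exact_mod_cast hτ v
        linarith
      · have hρ1 : 1 ≤ r v := hrpos v hvS
        have hdarts : (∑ d ∈ Finset.univ.filter (fun d : G.Dart => d.toProd.2 = v),
              (if t (Sum.inl (Sum.inl v)) < t (Sum.inr d) then (1:ℤ) else 0))
            ≤ (((Finset.univ.filter (fun d : G.Dart => d.toProd.2 = v)).filter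
                (fun d => ¬ d.toProd.1 ∈ A (r v - 1))).card : ℤ) := by
          rw [← Finset.sum_boole]
          refine Finset.sum_le_sum fun d _ => ?_
          by_cases hdA : d.toProd.1 ∈ A (r v - 1)
          · have h0 : ¬ (t (Sum.inl (Sum.inl v)) < t (Sum.inr d)) := by
              intro hlt
              have hst : stage (Sum.inr d) < stage (Sum.inl (Sum.inl v)) := by
                rw [hstage_p, hstage_i, if_neg hvS]
                by_cases hdS : d.toProd.1 ∈ S
                · rw [if_pos hdS]
                  omega
                · rw [if_neg hdS]
                  have : r d.toProd.1 ≤ r v - 1 := (hr_le _ _).1 hdA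
                  omega
              have := hstage_t _ _ hst
              omega
            rw [if_neg h0, if_neg (not_not_intro hdA)]
          · rw [if_pos hdA]
            split <;> norm_num
        have hsplit : (((Finset.univ.filter (fun d : G.Dart => d.toProd.2 = v)).filter
              (fun d => d.toProd.1 ∈ A (r v - 1))).card)
            + (((Finset.univ.filter (fun d : G.Dart => d.toProd.2 = v)).filter
              (fun d => ¬ d.toProd.1 ∈ A (r v - 1))).card)
            = G.degree v := by
          rw [Finset.card_filter_add_card_filter_not, consCard_snd]
        have hτin : τ v ≤ (((Finset.univ.filter (fun d : G.Dart => d.toProd.2 = v)).filter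
            (fun d => d.toProd.1 ∈ A (r v - 1))).card) := by
          rw [hcard_eq v (A (r v - 1))]
          exact hract v hvS
        have : ((((Finset.univ.filter (fun d : G.Dart => d.toProd.2 = v)).filter
            (fun d => ¬ d.toProd.1 ∈ A (r v - 1))).card) : ℤ) ≤ (G.degree v : ℤ) - τ v := by
          push_cast
          omega
        linarith
    · -- z = v_c
      rw [hm', consSin_c G N t v]
      have hxg : (x + g) (Sum.inl (Sum.inr (Sum.inl v))) = 1 := by
        show (1 : ℤ) + 0 = 1
        ring
      rw [hxg]
      have hterm1 : (if t (Sum.inl (Sum.inr (Sum.inl v))) < t (Sum.inl (Sum.inl v))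
          then (N:ℤ) else 0) = 0 := by
        rw [if_neg]
        intro hlt
        have hst : stage (Sum.inl (Sum.inl v)) < stage (Sum.inl (Sum.inr (Sum.inl v))) := by
          rw [hstage_i, hstage_c]
          split <;> omega
        have := hstage_t _ _ hst
        omega
      rw [hterm1]
      split <;> norm_num
    · -- z = v_o
      rw [hm', consSin_o G N t v]
      have hterm2 : (∑ d ∈ Finset.univ.filter (fun d : G.Dart => d.toProd.1 = v),
            (if t (Sum.inl (Sum.inr (Sum.inr v))) < t (Sum.inr d) then (N:ℤ) else 0))
          ≤ (G.degree v : ℤ) * N := by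
        calc (∑ d ∈ Finset.univ.filter (fun d : G.Dart => d.toProd.1 = v),
              (if t (Sum.inl (Sum.inr (Sum.inr v))) < t (Sum.inr d) then (N:ℤ) else 0))
            ≤ ∑ _d ∈ Finset.univ.filter (fun d : G.Dart => d.toProd.1 = v), (N:ℤ) := by
              refine Finset.sum_le_sum fun d _ => ?_
              split
              · exact le_refl _
              · positivity
          _ = (G.degree v : ℤ) * N := by
              rw [Finset.sum_const, consCard_fst]
              simp [mul_comm]
      by_cases hvS : v ∈ S
      · have hxg : (x + g) (Sum.inl (Sum.inr (Sum.inr v))) = (N : ℤ) * G.degree v + 1 := by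
          show ((N : ℤ) * G.degree v) + (if v ∈ S then (1:ℤ) else 0) = _
          rw [if_pos hvS]
        rw [hxg]
        have hterm1 : (if t (Sum.inl (Sum.inr (Sum.inr v))) < t (Sum.inl (Sum.inr (Sum.inl v)))
            then (1:ℤ) else 0) ≤ 1 := by
          split <;> norm_num
        linarith [hterm2, hterm1, mul_comm (G.degree v : ℤ) (N:ℤ)]
      · have hxg : (x + g) (Sum.inl (Sum.inr (Sum.inr v))) = (N : ℤ) * G.degree v := by
          show ((N : ℤ) * G.degree v) + (if v ∈ S then (1:ℤ) else 0) = _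
          rw [if_neg hvS]
          ring
        rw [hxg]
        have hterm1 : (if t (Sum.inl (Sum.inr (Sum.inr v))) < t (Sum.inl (Sum.inr (Sum.inl v)))
            then (1:ℤ) else 0) = 0 := by
          rw [if_neg]
          intro hlt
          have hst : stage (Sum.inl (Sum.inr (Sum.inl v))) < stage (Sum.inl (Sum.inr (Sum.inr v))) := by
            rw [hstage_c, hstage_o, if_neg hvS, if_neg hvS]
            omega
          have := hstage_t _ _ hst
          omega
        rw [hterm1]
        linarith [hterm2, mul_comm (G.degree v : ℤ) (N:ℤ)]
    · -- z = p_d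
      rw [hm', consSin_p G N t d]
      have hxg : (x + g) (Sum.inr d) = 1 := by
        show (1 : ℤ) + 0 = 1
        ring
      rw [hxg]
      have hterm1 : (if t (Sum.inr d) < t (Sum.inl (Sum.inr (Sum.inr d.toProd.1)))
          then (N:ℤ) else 0) = 0 := by
        rw [if_neg]
        intro hlt
        have hst : stage (Sum.inl (Sum.inr (Sum.inr d.toProd.1))) < stage (Sum.inr d) := by
          rw [hstage_o, hstage_p]
          split <;> omega
        have := hstage_t _ _ hst
        omega
      rw [hterm1]
      split <;> norm_num
  have hrecU : mgRecurrent m' (x + g) :=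
    order_to_recurrent m' hsym hdiag (x + g) t htinj hordU
  have hUmem : tssMin G τ ∈ {n : ℕ | ∃ g' : ((V ⊕ V ⊕ V) ⊕ G.Dart) → ℤ,
      mgEffective g' ∧ mgDegDiv g' = (n:ℤ) ∧ mgRecurrent m' (x + g')} :=
    ⟨g, hgeff, by rw [hgdeg, hScard], hrecU⟩
  have hU : mgDistRec m' x ≤ tssMin G τ := Nat.sInf_le hUmem
  -- =========================== lower bound ===========================
  have hL : tssMin G τ ≤ mgDistRec m' x := by
    have hRne : {n : ℕ | ∃ g' : ((V ⊕ V ⊕ V) ⊕ G.Dart) → ℤ,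
        mgEffective g' ∧ mgDegDiv g' = (n:ℤ) ∧ mgRecurrent m' (x + g')}.Nonempty :=
      ⟨tssMin G τ, hUmem⟩
    have hmemr := Nat.sInf_mem hRne
    obtain ⟨g2, hg2eff, hg2deg, hg2rec⟩ := hmemr
    have hdrec : (mgDistRec m' x : ℤ) = mgDegDiv g2 := hg2deg.symm
    obtain ⟨t2, ht2inj, hord2⟩ := recurrent_to_order m' hsym hdiag hmconn (x + g2) hg2rec
    set Gad : V → ℤ := fun v => g2 (Sum.inl (Sum.inl v)) + g2 (Sum.inl (Sum.inr (Sum.inl v)))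
      + g2 (Sum.inl (Sum.inr (Sum.inr v)))
      + ∑ d ∈ Finset.univ.filter (fun d : G.Dart => d.toProd.1 = v), g2 (Sum.inr d) with hGad
    set S2 : Finset V := Finset.univ.filter (fun v => 0 < Gad v) with hS2
    have hdartsum : (∑ v : V, ∑ d ∈ Finset.univ.filter (fun d : G.Dart => d.toProd.1 = v),
        g2 (Sum.inr d)) = ∑ d : G.Dart, g2 (Sum.inr d) :=
      Finset.sum_fiberwise_of_maps_to (fun d _ => Finset.mem_univ _) _
    have hGadsum : (∑ v : V, Gad v) = mgDegDiv g2 := by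
      unfold mgDegDiv
      rw [consSum G g2, hGad]
      rw [Finset.sum_add_distrib, Finset.sum_add_distrib, Finset.sum_add_distrib, hdartsum]
    have hGadnn : ∀ v, 0 ≤ Gad v := by
      intro v
      rw [hGad]
      have h4 : (0:ℤ) ≤ ∑ d ∈ Finset.univ.filter (fun d : G.Dart => d.toProd.1 = v),
          g2 (Sum.inr d) := Finset.sum_nonneg fun d _ => hg2eff _
      have := hg2eff (Sum.inl (Sum.inl v))
      have := hg2eff (Sum.inl (Sum.inr (Sum.inl v)))
      have := hg2eff (Sum.inl (Sum.inr (Sum.inr v)))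
      positivity
    have hcardS2 : (S2.card : ℤ) ≤ mgDegDiv g2 := by
      rw [← hGadsum]
      calc (S2.card : ℤ) = ∑ _v ∈ S2, (1:ℤ) := by simp
        _ ≤ ∑ v ∈ S2, Gad v := Finset.sum_le_sum (fun v hv => by
            have := (Finset.mem_filter.1 hv).2
            omega)
        _ ≤ ∑ v, Gad v := Finset.sum_le_sum_of_subset_of_nonneg (Finset.subset_univ _)
            (fun v _ _ => hGadnn v)
    have hzero : ∀ v, v ∉ S2 → g2 (Sum.inl (Sum.inl v)) = 0 ∧ g2 (Sum.inl (Sum.inr (Sum.inl v))) = 0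
        ∧ g2 (Sum.inl (Sum.inr (Sum.inr v))) = 0
        ∧ ∀ d : G.Dart, d.toProd.1 = v → g2 (Sum.inr d) = 0 := by
      intro v hv
      have h0 : ¬ (0 < Gad v) := fun h => hv (Finset.mem_filter.2 ⟨Finset.mem_univ v, h⟩)
      have h0' : Gad v = 0 := le_antisymm (by omega) (hGadnn v)
      have h0'' : g2 (Sum.inl (Sum.inl v)) + g2 (Sum.inl (Sum.inr (Sum.inl v)))
          + g2 (Sum.inl (Sum.inr (Sum.inr v)))
          + (∑ d ∈ Finset.univ.filter (fun d : G.Dart => d.toProd.1 = v), g2 (Sum.inr d)) = 0 := h0'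
      have e1 := hg2eff (Sum.inl (Sum.inl v))
      have e2 := hg2eff (Sum.inl (Sum.inr (Sum.inl v)))
      have e3 := hg2eff (Sum.inl (Sum.inr (Sum.inr v)))
      have e4 : (0:ℤ) ≤ ∑ d ∈ Finset.univ.filter (fun d : G.Dart => d.toProd.1 = v),
          g2 (Sum.inr d) := Finset.sum_nonneg fun d _ => hg2eff _
      have hs0 : (∑ d ∈ Finset.univ.filter (fun d : G.Dart => d.toProd.1 = v),
          g2 (Sum.inr d)) = 0 := by omega
      refine ⟨by omega, by omega, by omega, ?_⟩
      intro d hd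
      have := (Finset.sum_eq_zero_iff_of_nonneg (fun d _ => hg2eff (Sum.inr d))).1 hs0 d
        (Finset.mem_filter.2 ⟨Finset.mem_univ d, hd⟩)
      exact this
    -- ordering facts for chip-free gadgets
    have hfact_a : ∀ v, v ∉ S2 →
        t2 (Sum.inl (Sum.inl v)) < t2 (Sum.inl (Sum.inr (Sum.inl v))) := by
      intro v hv
      have hc := hord2 (Sum.inl (Sum.inr (Sum.inl v)))
      rw [hm', consSin_c G N t2 v] at hc
      have hxv : (x + g2) (Sum.inl (Sum.inr (Sum.inl v))) = 1 := by
        show x _ + g2 _ = 1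
        rw [(hzero v hv).2.1]
        show (1:ℤ) + 0 = 1
        ring
      rw [hxv] at hc
      have h2 : (0:ℤ) ≤ if t2 (Sum.inl (Sum.inr (Sum.inl v))) < t2 (Sum.inl (Sum.inr (Sum.inr v)))
          then (1:ℤ) else 0 := by
        split <;> norm_num
      have hne : t2 (Sum.inl (Sum.inl v)) ≠ t2 (Sum.inl (Sum.inr (Sum.inl v))) := by
        intro hh
        have := ht2inj hh
        simp at this
      by_cases h : t2 (Sum.inl (Sum.inr (Sum.inl v))) < t2 (Sum.inl (Sum.inl v))
      · rw [if_pos h] at hc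
        have hNl : (2:ℤ) ≤ (N:ℤ) := by exact_mod_cast hN2
        linarith
      · omega
    have hfact_b : ∀ v, v ∉ S2 → ∀ d : G.Dart, d.toProd.1 = v →
        t2 (Sum.inl (Sum.inr (Sum.inr v))) < t2 (Sum.inr d) := by
      intro v hv d hd
      have hp := hord2 (Sum.inr d)
      rw [hm', consSin_p G N t2 d] at hp
      have hxp : (x + g2) (Sum.inr d) = 1 := by
        show x _ + g2 _ = 1
        rw [(hzero v hv).2.2.2 d hd]
        show (1:ℤ) + 0 = 1
        ring
      rw [hxp, hd] at hp
      have h2 : (0:ℤ) ≤ if t2 (Sum.inr d) < t2 (Sum.inl (Sum.inl d.toProd.2))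
          then (1:ℤ) else 0 := by
        split <;> norm_num
      have hne : t2 (Sum.inl (Sum.inr (Sum.inr v))) ≠ t2 (Sum.inr d) := by
        intro hh
        have := ht2inj hh
        simp at this
      by_cases h : t2 (Sum.inr d) < t2 (Sum.inl (Sum.inr (Sum.inr v)))
      · rw [if_pos h] at hp
        have hNl : (2:ℤ) ≤ (N:ℤ) := by exact_mod_cast hN2
        linarith
      · omega
    have hfact_c : ∀ v, v ∉ S2 →
        t2 (Sum.inl (Sum.inr (Sum.inl v))) < t2 (Sum.inl (Sum.inr (Sum.inr v))) := by
      intro v hv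
      have ho := hord2 (Sum.inl (Sum.inr (Sum.inr v)))
      rw [hm', consSin_o G N t2 v] at ho
      have hxo : (x + g2) (Sum.inl (Sum.inr (Sum.inr v))) = (N:ℤ) * G.degree v := by
        show x _ + g2 _ = _
        rw [(hzero v hv).2.2.1]
        show ((N:ℤ) * G.degree v) + 0 = _
        ring
      rw [hxo] at ho
      have hdsum : (∑ d ∈ Finset.univ.filter (fun d : G.Dart => d.toProd.1 = v),
          (if t2 (Sum.inl (Sum.inr (Sum.inr v))) < t2 (Sum.inr d) then (N:ℤ) else 0))
          = (G.degree v : ℤ) * N := by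
        rw [Finset.sum_congr rfl (fun d hd =>
          if_pos (hfact_b v hv d (Finset.mem_filter.1 hd).2))]
        rw [Finset.sum_const, consCard_fst]
        simp [mul_comm]
      rw [hdsum] at ho
      have hne : t2 (Sum.inl (Sum.inr (Sum.inl v))) ≠ t2 (Sum.inl (Sum.inr (Sum.inr v))) := by
        intro hh
        have := ht2inj hh
        simp at this
      by_cases h : t2 (Sum.inl (Sum.inr (Sum.inr v))) < t2 (Sum.inl (Sum.inr (Sum.inl v)))
      · rw [if_pos h] at ho
        have : (G.degree v : ℤ) * N = (N:ℤ) * G.degree v := by ring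
        linarith
      · omega
    have hfact_d : ∀ v, v ∉ S2 →
        τ v ≤ ((Finset.univ.filter (fun d : G.Dart => d.toProd.2 = v)).filter
          (fun d => t2 (Sum.inr d) < t2 (Sum.inl (Sum.inl v)))).card := by
      intro v hv
      have hi := hord2 (Sum.inl (Sum.inl v))
      rw [hm', consSin_i G N t2 v] at hi
      have hxi : (x + g2) (Sum.inl (Sum.inl v)) = (G.degree v : ℤ) + N - τ v := by
        show x _ + g2 _ = _
        rw [(hzero v hv).1]
        show ((G.degree v : ℤ) + N - τ v) + 0 = _
        ring
      rw [hxi, if_pos (hfact_a v hv)] at hi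
      have hsum_eq : (∑ d ∈ Finset.univ.filter (fun d : G.Dart => d.toProd.2 = v),
          (if t2 (Sum.inl (Sum.inl v)) < t2 (Sum.inr d) then (1:ℤ) else 0))
          = (((Finset.univ.filter (fun d : G.Dart => d.toProd.2 = v)).filter
              (fun d => t2 (Sum.inl (Sum.inl v)) < t2 (Sum.inr d))).card : ℤ) := by
        rw [Finset.sum_boole]
      rw [hsum_eq] at hi
      have hfeq : (Finset.univ.filter (fun d : G.Dart => d.toProd.2 = v)).filter
            (fun d => ¬ (t2 (Sum.inl (Sum.inl v)) < t2 (Sum.inr d)))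
          = (Finset.univ.filter (fun d : G.Dart => d.toProd.2 = v)).filter
            (fun d => t2 (Sum.inr d) < t2 (Sum.inl (Sum.inl v))) := by
        apply Finset.filter_congr
        intro d _
        have hne : t2 (Sum.inl (Sum.inl v)) ≠ t2 (Sum.inr d) := by
          intro hh
          have := ht2inj hh
          simp at this
        constructor
        · intro h
          omega
        · intro h
          omega
      have hsplit : ((Finset.univ.filter (fun d : G.Dart => d.toProd.2 = v)).filter
            (fun d => t2 (Sum.inl (Sum.inl v)) < t2 (Sum.inr d))).card
          + ((Finset.univ.filter (fun d : G.Dart => d.toProd.2 = v)).filter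
            (fun d => t2 (Sum.inr d) < t2 (Sum.inl (Sum.inl v)))).card
          = G.degree v := by
        rw [← hfeq, Finset.card_filter_add_card_filter_not, consCard_snd]
      have hdegc : ((G.degree v : ℤ)) = ((G.degree v : ℕ) : ℤ) := rfl
      push_cast at hi
      omega
    have hchain : ∀ (u : V) (d : G.Dart), u ∉ S2 → d.toProd.1 = u →
        t2 (Sum.inl (Sum.inl u)) < t2 (Sum.inr d) := fun u d hu hd =>
      lt_trans (hfact_a u hu) (lt_trans (hfact_c u hu) (hfact_b u hu d hd))
    have hiter : ∀ M : ℕ, ∀ v : V, (v ∈ S2 ∨ t2 (Sum.inl (Sum.inl v)) < M) →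
        v ∈ (tssStep G τ)^[M] S2 := by
      intro M
      induction M with
      | zero =>
        rintro v (h | h)
        · exact h
        · omega
      | succ M ih =>
        rintro v hv
        have hstep : (tssStep G τ)^[M+1] S2 = tssStep G τ ((tssStep G τ)^[M] S2) :=
          Function.iterate_succ_apply' _ _ _
        by_cases hcase : v ∈ S2 ∨ t2 (Sum.inl (Sum.inl v)) < M
        · have := ih v hcase
          rw [hstep]
          exact tssStep_subset G τ _ this
        · push_neg at hcase
          obtain ⟨hvS2, hM⟩ := hcase
          rcases hv with h | h
          · exact absurd h hvS2
          · have hcard2 : ((Finset.univ.filter (fun d : G.Dart => d.toProd.2 = v)).filter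
                (fun d => t2 (Sum.inr d) < t2 (Sum.inl (Sum.inl v)))).card
                ≤ (((tssStep G τ)^[M] S2).filter (fun u => G.Adj v u)).card := by
              apply Finset.card_le_card_of_injOn (fun d => d.toProd.1)
              · intro d hd
                simp only [Finset.mem_coe, Finset.mem_filter, Finset.mem_univ, true_and] at hd
                obtain ⟨hd2, hlt⟩ := hd
                refine Finset.mem_filter.2 ⟨?_, ?_⟩
                · apply ih
                  by_cases hdS : d.toProd.1 ∈ S2
                  · exact Or.inl hdS
                  · right
                    have := hchain d.toProd.1 d hdS rfl
                    beta_reduce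
                    omega
                · have := d.adj
                  rw [hd2] at this
                  exact this.symm
              · intro a ha b hb hab
                simp only [Finset.coe_filter, Set.mem_setOf_eq, Finset.mem_filter,
                  Finset.mem_univ, true_and] at ha hb
                apply SimpleGraph.Dart.ext
                exact Prod.ext hab (ha.1.trans hb.1.symm)
            have hfinal : τ v ≤ (((tssStep G τ)^[M] S2).filter (fun u => G.Adj v u)).card :=
              le_trans (hfact_d v hvS2) hcard2
            rw [hstep]
            unfold tssStep
            exact Finset.mem_union.2 (Or.inr (Finset.mem_filter.2 ⟨Finset.mem_univ v, hfinal⟩))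
    have htgt : tssIsTargetSet G τ S2 := by
      refine ⟨(Finset.univ.sup (fun v : V => t2 (Sum.inl (Sum.inl v)))) + 1, ?_⟩
      apply Finset.eq_univ_of_forall
      intro v
      apply hiter _ v
      right
      have : t2 (Sum.inl (Sum.inl v)) ≤ Finset.univ.sup (fun v : V => t2 (Sum.inl (Sum.inl v))) :=
        Finset.le_sup (f := fun v : V => t2 (Sum.inl (Sum.inl v))) (Finset.mem_univ v)
      omega
    have h1 : tssMin G τ ≤ S2.card := Nat.sInf_le ⟨S2, htgt, rfl⟩
    have h2 : (S2.card : ℤ) ≤ (mgDistRec m' x : ℤ) := by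
      rw [hdrec]
      exact hcardS2
    have h3 : S2.card ≤ mgDistRec m' x := by exact_mod_cast h2
    omega
  exact le_antisymm hL hU
end

section
/- Let G = (V, E) be a connected multigraph, f a divisor on G, and M a positive integer with M > dist_rec_G(f) + max{0, max_{v ∈ V}(f(v) − d_G(v))}; let G' and f' be as in the apex construction. Then M > dist_nonhalt_{G'}(f'). -/
variable {V : Type*} [Fintype V] [DecidableEq V]

/-- Edge multiplicities of the apex construction: the edges of `G` (on the `some`
vertices) together with `M` parallel edges between the new vertex `none` and each
original vertex. -/
def apexM (m : V → V → ℕ) (M : ℕ) : Option V → Option V → ℕ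
  | some u, some v => m u v
  | some _, none => M
  | none, some _ => M
  | none, none => 0

/-- The divisor `f\'` of the apex construction: `f\'(v) = f(v) + M` on original
vertices and `f\'(v_new) = 0`. -/
def apexF (f : V → ℤ) (M : ℕ) : Option V → ℤ
  | some v => f v + M
  | none => 0

set_option linter.unusedSectionVars false

/-- firing vector -/
def mgW (m : V → V → ℕ) (v : V) : V → ℤ :=
  fun u => if u = v then -(mgDeg m v : ℤ) else m v u

lemma mgFire_eq (m : V → V → ℕ) (f : V → ℤ) (v : V) :
    mgFire m f v = f + mgW m v := by
  funext u
  simp only [mgFire, mgW, Pi.add_apply]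
  by_cases h : u = v
  · subst h; simp [sub_eq_add_neg]
  · simp [h]

lemma mgPlay_append (m : V → V → ℕ) (f : V → ℤ) (A B : List V) :
    mgPlay m f (A ++ B) = mgPlay m (mgPlay m f A) B :=
  List.foldl_append

lemma mgPlay_eq_sum (m : V → V → ℕ) (f : V → ℤ) (L : List V) (u : V) :
    mgPlay m f L u = f u + ∑ v, (L.count v : ℤ) * mgW m v u := by
  induction L generalizing f with
  | nil => simp [mgPlay]
  | cons a L ih =>
    have hplay : mgPlay m f (a :: L) = mgPlay m (mgFire m f a) L := rfl
    have hc : ∀ v : V, ((a :: L).count v : ℤ) = (L.count v : ℤ) + if v = a then 1 else 0 := by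
      intro v
      rw [List.count_cons]
      by_cases h : v = a
      · subst h; simp
      · simp [h, Ne.symm h]
    have hite : ∑ v, (if v = a then (1:ℤ) else 0) * mgW m v u = mgW m a u := by
      rw [Finset.sum_eq_single a]
      · simp
      · intro b _ hb
        rw [if_neg hb, zero_mul]
      · intro h
        exact absurd (Finset.mem_univ a) h
    have key : ∑ v, ((a :: L).count v : ℤ) * mgW m v u
        = (∑ v, (L.count v : ℤ) * mgW m v u) + mgW m a u := by
      calc ∑ v, ((a :: L).count v : ℤ) * mgW m v u
          = ∑ v, ((L.count v : ℤ) * mgW m v u + (if v = a then (1:ℤ) else 0) * mgW m v u) :=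
            Finset.sum_congr rfl (fun v _ => by rw [hc v, add_mul])
        _ = _ := by rw [Finset.sum_add_distrib, hite]
    rw [hplay, ih, mgFire_eq, key]
    simp only [Pi.add_apply]
    ring

lemma mgLegal_append (m : V → V → ℕ) (f : V → ℤ) (A B : List V) :
    mgLegal m f (A ++ B) ↔ mgLegal m f A ∧ mgLegal m (mgPlay m f A) B := by
  induction A generalizing f with
  | nil => simp [mgLegal, mgPlay]
  | cons a A ih =>
    constructor
    · rintro ⟨h1, h2⟩
      have h2' : mgLegal m (mgFire m f a) (A ++ B) := h2
      rw [ih] at h2'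
      exact ⟨⟨h1, h2'.1⟩, h2'.2⟩
    · rintro ⟨⟨h1, h2⟩, h3⟩
      exact ⟨h1, (ih _).mpr ⟨h2, h3⟩⟩

lemma mgFire_comm (m : V → V → ℕ) (f : V → ℤ) (a b : V) :
    mgFire m (mgFire m f a) b = mgFire m (mgFire m f b) a := by
  rw [mgFire_eq, mgFire_eq, mgFire_eq, mgFire_eq]
  abel

lemma mgFire_mono_other (m : V → V → ℕ) (f : V → ℤ) (a v : V) (h : v ≠ a) :
    f v ≤ mgFire m f a v := by
  simp only [mgFire, if_neg h]
  exact le_add_of_nonneg_right (Int.natCast_nonneg _)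

lemma mgPlay_not_mem_mono (m : V → V → ℕ) (f : V → ℤ) (L : List V) (v : V) (hv : v ∉ L) :
    f v ≤ mgPlay m f L v := by
  induction L generalizing f with
  | nil => exact le_refl _
  | cons a L ih =>
    have h1 : v ≠ a := fun h => hv (h ▸ (List.mem_cons_self (a := a) (l := L)))
    have h2 : v ∉ L := fun h => hv (List.mem_cons_of_mem a h)
    calc f v ≤ mgFire m f a v := mgFire_mono_other m f a v h1
      _ ≤ mgPlay m (mgFire m f a) L v := ih _ h2

/-- Move a first occurrence of an active vertex to the front of a legal game. -/
lemma mgLegal_front_move (m : V → V → ℕ) (A : List V) :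
    ∀ (f : V → ℤ) (v : V) (B : List V), (mgDeg m v : ℤ) ≤ f v → v ∉ A →
    mgLegal m f (A ++ v :: B) →
    mgLegal m f (v :: (A ++ B)) ∧ mgPlay m f (v :: (A ++ B)) = mgPlay m f (A ++ v :: B) := by
  induction A with
  | nil => intro f v B hv _ hleg; exact ⟨hleg, rfl⟩
  | cons a A ih =>
    intro f v B hv hnm hleg
    have hva : v ≠ a := fun h => hnm (h ▸ (List.mem_cons_self (a := a) (l := A)))
    have hvA : v ∉ A := fun h => hnm (List.mem_cons_of_mem a h)
    obtain ⟨ha, hleg'⟩ : ((mgDeg m a : ℤ) ≤ f a) ∧ mgLegal m (mgFire m f a) (A ++ v :: B) := hleg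
    have hv' : (mgDeg m v : ℤ) ≤ mgFire m f a v := le_trans hv (mgFire_mono_other m f a v hva)
    obtain ⟨ihleg, ihplay⟩ := ih (mgFire m f a) v B hv' hvA hleg'
    obtain ⟨_, ihleg'⟩ : ((mgDeg m v : ℤ) ≤ mgFire m f a v) ∧
        mgLegal m (mgFire m (mgFire m f a) v) (A ++ B) := ihleg
    have ha' : (mgDeg m a : ℤ) ≤ mgFire m f v a :=
      le_trans ha (mgFire_mono_other m f v a (Ne.symm hva))
    refine ⟨⟨hv, ha', ?_⟩, ?_⟩
    · rw [mgFire_comm]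
      exact ihleg'
    · show mgPlay m (mgFire m (mgFire m f v) a) (A ++ B)
        = mgPlay m (mgFire m f a) (A ++ v :: B)
      rw [mgFire_comm]
      exact ihplay

lemma mem_split_first {v : V} {L : List V} (h : v ∈ L) :
    ∃ A B, L = A ++ v :: B ∧ v ∉ A := by
  induction L with
  | nil => cases h
  | cons a L ih =>
    by_cases hva : v = a
    · exact ⟨[], L, by simp [hva], List.not_mem_nil⟩
    · have : v ∈ L := by
        rcases List.mem_cons.mp h with h' | h'
        · exact absurd h' hva
        · exact h'
      obtain ⟨A, B, hAB, hnm⟩ := ih this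
      exact ⟨a :: A, B, by rw [hAB, List.cons_append],
        fun hm => by rcases List.mem_cons.mp hm with h' | h' <;> [exact hva h'; exact hnm h']⟩

/-- Least action principle. -/
lemma mgLeastAction (m : V → V → ℕ) :
    ∀ (L' : List V) (f : V → ℤ) (L : List V), mgLegal m f L → mgStable m (mgPlay m f L) →
    mgLegal m f L' → ∀ x, L'.count x ≤ L.count x := by
  intro L'
  induction L' with
  | nil => intro f L _ _ _ x; simp
  | cons v R ih =>
    intro f L hL hstab hL' x
    obtain ⟨hv, hR⟩ : ((mgDeg m v : ℤ) ≤ f v) ∧ mgLegal m (mgFire m f v) R := hL'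
    have hvL : v ∈ L := by
      by_contra hnm
      have := mgPlay_not_mem_mono m f L v hnm
      exact absurd (hstab v) (not_lt.mpr (le_trans hv this))
    obtain ⟨A, B, hAB, hnmA⟩ := mem_split_first hvL
    subst hAB
    obtain ⟨hleg2, hplay2⟩ := mgLegal_front_move m A f v B hv hnmA hL
    obtain ⟨_, hleg3⟩ : ((mgDeg m v : ℤ) ≤ f v) ∧ mgLegal m (mgFire m f v) (A ++ B) := hleg2
    have hstab3 : mgStable m (mgPlay m (mgFire m f v) (A ++ B)) := by
      have : mgPlay m (mgFire m f v) (A ++ B) = mgPlay m f (A ++ v :: B) := hplay2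
      rw [this]; exact hstab
    have hcnt := ih (mgFire m f v) (A ++ B) hleg3 hstab3 hR x
    by_cases hx : x = v
    · have c1 : (v :: R).count x = R.count x + 1 := by simp [List.count_cons, hx]
      have c2 : (A ++ v :: B).count x = A.count x + B.count x + 1 := by
        simp [List.count_append, List.count_cons, hx]
        ring
      have c3 : (A ++ B).count x = A.count x + B.count x := by simp [List.count_append]
      omega
    · have c1 : (v :: R).count x = R.count x := by simp [List.count_cons, hx, Ne.symm hx]
      have c2 : (A ++ v :: B).count x = A.count x + B.count x := by
        simp [List.count_append, List.count_cons, hx, Ne.symm hx]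
      have c3 : (A ++ B).count x = A.count x + B.count x := by simp [List.count_append]
      omega

/-- A divisor admitting a legal cycle is non-halting. -/
lemma mgRecurrent_not_halting (m : V → V → ℕ) (f : V → ℤ)
    (h : mgRecurrent m f) : ¬ mgHalting m f := by
  obtain ⟨C, hCne, hCleg, hCplay⟩ := h
  rintro ⟨L, hLleg, hLstab⟩
  obtain ⟨v₀, hv₀⟩ := List.exists_mem_of_ne_nil C hCne
  -- arbitrarily long legal games
  have key : ∀ N : ℕ, ∃ L' : List V, mgLegal m f L' ∧ N ≤ L'.count v₀ := by
    intro N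
    induction N with
    | zero => exact ⟨[], trivial, Nat.zero_le _⟩
    | succ N ihN =>
      obtain ⟨L', hleg, hcnt⟩ := ihN
      refine ⟨C ++ L', ?_, ?_⟩
      · rw [mgLegal_append, hCplay]
        exact ⟨hCleg, hleg⟩
      · rw [List.count_append]
        have : 1 ≤ C.count v₀ := List.count_pos_iff.mpr hv₀
        omega
  obtain ⟨L', hleg, hcnt⟩ := key (L.count v₀ + 1)
  have := mgLeastAction m L' f L hLleg hLstab hleg v₀
  omega

lemma mgW_apply (m : V → V → ℕ) (hloop : ∀ v, m v v = 0) (v u : V) :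
    mgW m v u = (m v u : ℤ) - (if v = u then (mgDeg m u : ℤ) else 0) := by
  simp only [mgW]
  by_cases h : v = u
  · subst h; simp [eq_comm, hloop]
  · have : ¬ (u = v) := fun e => h e.symm
    simp [this, h]

lemma mg_sum_count_W (m : V → V → ℕ) (hloop : ∀ v, m v v = 0) (c : V → ℤ) (u : V) :
    ∑ v, c v * mgW m v u = (∑ v, c v * (m v u : ℤ)) - c u * (mgDeg m u : ℤ) := by
  have : ∀ v, c v * mgW m v u
      = c v * (m v u : ℤ) - (if v = u then c v * (mgDeg m u : ℤ) else 0) := by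
    intro v
    rw [mgW_apply m hloop]
    by_cases h : v = u <;> simp [h] <;> ring
  rw [Finset.sum_congr rfl (fun v _ => this v), Finset.sum_sub_distrib,
    Finset.sum_ite_eq' Finset.univ u (fun v => c v * (mgDeg m u : ℤ))]
  simp

lemma mgDeg_symm_sum (m : V → V → ℕ) (hsymm : ∀ u v, m u v = m v u) (u : V) :
    ((mgDeg m u : ℤ)) = ∑ v, (m v u : ℤ) := by
  simp only [mgDeg]
  push_cast
  exact Finset.sum_congr rfl (fun v _ => by rw [hsymm])

lemma mg_sum_W (m : V → V → ℕ) (hsymm : ∀ u v, m u v = m v u) (hloop : ∀ v, m v v = 0)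
    (u : V) : ∑ v, mgW m v u = 0 := by
  have := mg_sum_count_W m hloop (fun _ => 1) u
  simp only [one_mul] at this
  rw [this, ← mgDeg_symm_sum m hsymm u, sub_self]

/-- In a legal cycle on a connected graph, all vertices fire equally often. -/
lemma mgCycle_count_const [Nonempty V] (m : V → V → ℕ) (hsymm : ∀ u v, m u v = m v u)
    (hloop : ∀ v, m v v = 0) (hconn : mgConnected m) (f : V → ℤ) (C : List V)
    (hplay : mgPlay m f C = f) : ∀ x y : V, C.count x = C.count y := by
  have hzero : ∀ u, ∑ v, (C.count v : ℤ) * mgW m v u = 0 := by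
    intro u
    have := mgPlay_eq_sum m f C u
    rw [hplay] at this
    linarith
  have key : ∀ u, ∑ v, (C.count v : ℤ) * (m v u : ℤ) = (C.count u : ℤ) * (mgDeg m u : ℤ) := by
    intro u
    have h1 := mg_sum_count_W m hloop (fun v => (C.count v : ℤ)) u
    rw [hzero u] at h1
    linarith
  -- step from a max vertex to a neighbor
  have step : ∀ b y : V, (∀ a : V, C.count a ≤ C.count b) → 0 < m b y →
      C.count y = C.count b := by
    intro b y hmax hpos
    have hle : ∀ v ∈ Finset.univ, (C.count v : ℤ) * (m v b : ℤ)
        ≤ (C.count b : ℤ) * (m v b : ℤ) := by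
      intro v _
      exact mul_le_mul_of_nonneg_right (by exact_mod_cast hmax v) (Int.natCast_nonneg _)
    have hsum : ∑ v, (C.count v : ℤ) * (m v b : ℤ) = ∑ v, (C.count b : ℤ) * (m v b : ℤ) := by
      rw [key b, ← Finset.mul_sum, ← mgDeg_symm_sum m hsymm b]
    have heach := (Finset.sum_eq_sum_iff_of_le hle).mp hsum y (Finset.mem_univ y)
    have hyb : (0:ℤ) < (m y b : ℤ) := by exact_mod_cast (hsymm b y ▸ hpos)
    have : (C.count y : ℤ) = (C.count b : ℤ) :=
      mul_right_cancel₀ (ne_of_gt hyb) heach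
    exact_mod_cast this
  obtain ⟨x₀, _, hmax⟩ := Finset.exists_max_image Finset.univ (fun v => C.count v)
    ⟨Classical.arbitrary V, Finset.mem_univ _⟩
  have hmax' : ∀ a : V, C.count a ≤ C.count x₀ := fun a => hmax a (Finset.mem_univ a)
  have hall : ∀ y : V, C.count y = C.count x₀ := by
    intro y
    have h := hconn x₀ y
    induction h with
    | refl => rfl
    | tail _ hby ih =>
      rename_i b y' _
      have hbmax : ∀ a : V, C.count a ≤ C.count b := fun a => ih ▸ hmax' a
      rw [step b y' hbmax hby, ih]
  intro x y
  rw [hall x, hall y]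

/-- Split a list at the first moment some vertex of `S` exhausts its quota `κ`. -/
lemma mg_split_lemma : ∀ (C : List V) (S : Finset V) (κ : V → ℕ), S.Nonempty →
    (∀ v ∈ S, 1 ≤ κ v) → (∀ v ∈ S, κ v ≤ C.count v) →
    ∃ P v Q, C = P ++ v :: Q ∧ v ∈ S ∧ (∀ u ∈ S, P.count u + 1 ≤ κ u) ∧ P.count v + 1 = κ v := by
  intro C
  induction C with
  | nil =>
    intro S κ hS h1 h2
    obtain ⟨v, hv⟩ := hS
    have hv2 := h2 v hv
    simp only [List.count_nil, Nat.le_zero] at hv2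
    exact absurd (h1 v hv) (by omega)
  | cons c C ih =>
    intro S κ hS h1 h2
    by_cases hc : c ∈ S ∧ κ c = 1
    · refine ⟨[], c, C, rfl, hc.1, ?_, by simp [hc.2]⟩
      intro u hu
      simpa using h1 u hu
    · set κ' : V → ℕ := fun x => if x = c then κ c - 1 else κ x with hκ'
      have hκc2 : c ∈ S → 2 ≤ κ c := by
        intro hcs
        have hne1 : κ c ≠ 1 := fun e => hc ⟨hcs, e⟩
        have := h1 c hcs
        omega
      have h1' : ∀ v ∈ S, 1 ≤ κ' v := by
        intro v hv
        by_cases hvc : v = c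
        · subst hvc
          simp only [hκ', if_pos rfl]
          have := hκc2 hv
          omega
        · simpa [hκ', hvc] using h1 v hv
      have h2' : ∀ v ∈ S, κ' v ≤ C.count v := by
        intro v hv
        have hcnt := h2 v hv
        by_cases hvc : v = c
        · subst hvc
          rw [List.count_cons_self] at hcnt
          simp only [hκ', if_pos rfl]
          omega
        · rw [List.count_cons_of_ne (Ne.symm hvc)] at hcnt
          simpa [hκ', hvc] using hcnt
      obtain ⟨P, v, Q, hPQ, hvS, hbound, heq⟩ := ih S κ' hS h1' h2'
      refine ⟨c :: P, v, Q, by rw [hPQ, List.cons_append], hvS, ?_, ?_⟩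
      · intro u hu
        have hb := hbound u hu
        by_cases huc : u = c
        · subst huc
          rw [List.count_cons_self]
          simp only [hκ', if_pos rfl] at hb
          have := hκc2 hu
          omega
        · rw [List.count_cons_of_ne (Ne.symm huc)]
          simpa [hκ', huc] using hb
      · by_cases hvc : v = c
        · subst hvc
          rw [List.count_cons_self]
          simp only [hκ', if_pos rfl] at heq
          have := hκc2 hvS
          omega
        · rw [List.count_cons_of_ne (Ne.symm hvc)]
          simpa [hκ', hvc] using heq

lemma mgRound_aux [Nonempty V] (m : V → V → ℕ) (hsymm : ∀ u v, m u v = m v u)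
    (hloop : ∀ v, m v v = 0) (r : V → ℤ) (C : List V) (k : ℕ)
    (hk : ∀ v : V, C.count v = k) (hk1 : 1 ≤ k) (hlegC : mgLegal m r C) :
    ∀ (n : ℕ) (S : Finset V), S.card = n →
    ∃ L : List V, L.Nodup ∧ L.toFinset = S ∧ mgLegal m (r + ∑ u ∈ Sᶜ, mgW m u) L := by
  intro n
  induction n with
  | zero =>
    intro S hcard
    rw [Finset.card_eq_zero] at hcard
    exact ⟨[], List.nodup_nil, by simp [hcard], trivial⟩
  | succ n ih =>
    intro S hcard
    have hSne : S.Nonempty := Finset.card_pos.mp (by omega)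
    by_cases hact : ∃ v ∈ S, (mgDeg m v : ℤ) ≤ (r + ∑ u ∈ Sᶜ, mgW m u) v
    · obtain ⟨v, hvS, hv⟩ := hact
      obtain ⟨L', hnd, htf, hleg'⟩ := ih (S.erase v)
        (by rw [Finset.card_erase_of_mem hvS, hcard]; rfl)
      have hvL' : v ∉ L' := by
        intro hm
        have : v ∈ S.erase v := htf ▸ List.mem_toFinset.mpr hm
        exact absurd this (Finset.notMem_erase v S)
      have hfire : mgFire m (r + ∑ u ∈ Sᶜ, mgW m u) v
          = r + ∑ u ∈ (S.erase v)ᶜ, mgW m u := by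
        rw [mgFire_eq, Finset.compl_erase, Finset.sum_insert (by simp [hvS])]
        abel
      refine ⟨v :: L', List.nodup_cons.mpr ⟨hvL', hnd⟩, ?_, hv, ?_⟩
      · rw [List.toFinset_cons, htf, Finset.insert_erase hvS]
      · rw [hfire]; exact hleg'
    · exfalso
      push_neg at hact
      obtain ⟨P, v, Q, hPQ, hvS, hbound, heqv⟩ := mg_split_lemma C S (fun _ => k) hSne
        (fun v _ => hk1) (fun v _ => le_of_eq (hk v).symm)
      have hlegsplit := (mgLegal_append m r P (v :: Q)).mp (hPQ ▸ hlegC)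
      have hdeg : (mgDeg m v : ℤ) ≤ mgPlay m r P v := hlegsplit.2.1
      rw [mgPlay_eq_sum] at hdeg
      set c : V → ℤ := fun u => (P.count u : ℤ) with hcdef
      have hcv : c v = (k : ℤ) - 1 := by
        have : (P.count v : ℤ) + 1 = (k : ℤ) := by exact_mod_cast heqv
        simp only [hcdef]; linarith
      have hcS : ∀ u ∈ S, c u ≤ (k : ℤ) - 1 := by
        intro u hu
        have : (P.count u : ℤ) + 1 ≤ (k : ℤ) := by exact_mod_cast hbound u hu
        simp only [hcdef]; linarith
      have hcall : ∀ u : V, c u ≤ (k : ℤ) := by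
        intro u
        have h1 : P.count u ≤ C.count u := by
          rw [hPQ, List.count_append]
          exact Nat.le_add_right _ _
        have : P.count u ≤ k := (hk u) ▸ h1
        simp only [hcdef]
        exact_mod_cast this
      rw [mg_sum_count_W m hloop c v, hcv] at hdeg
      set A : ℤ := ∑ u ∈ S, (m u v : ℤ) with hA
      set B : ℤ := ∑ u ∈ Sᶜ, (m u v : ℤ) with hB
      have hdegAB : (mgDeg m v : ℤ) = A + B := by
        rw [mgDeg_symm_sum m hsymm v, ← Finset.sum_add_sum_compl S (fun u => (m u v : ℤ))]
      have hsum_split : ∑ u, c u * (m u v : ℤ)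
          = ∑ u ∈ S, c u * (m u v : ℤ) + ∑ u ∈ Sᶜ, c u * (m u v : ℤ) :=
        (Finset.sum_add_sum_compl S (fun u => c u * (m u v : ℤ))).symm
      have hb1 : ∑ u ∈ Sᶜ, c u * (m u v : ℤ) ≤ (k : ℤ) * B := by
        rw [hB, Finset.mul_sum]
        exact Finset.sum_le_sum (fun u _ =>
          mul_le_mul_of_nonneg_right (hcall u) (Int.natCast_nonneg _))
      have hb2 : ∑ u ∈ S, c u * (m u v : ℤ) ≤ ((k : ℤ) - 1) * A := by
        rw [hA, Finset.mul_sum]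
        exact Finset.sum_le_sum (fun u hu =>
          mul_le_mul_of_nonneg_right (hcS u hu) (Int.natCast_nonneg _))
      have hAler : A ≤ r v := by
        have h1 : (mgDeg m v : ℤ) ≤ r v + (∑ u, c u * (m u v : ℤ))
            - ((k : ℤ) - 1) * (mgDeg m v : ℤ) := by linarith
        have h2 : (k : ℤ) * (A + B) ≤ r v + ((k : ℤ) - 1) * A + (k : ℤ) * B := by
          rw [← hdegAB]
          calc (k : ℤ) * (mgDeg m v : ℤ)
              ≤ r v + ∑ u, c u * (m u v : ℤ) := by linarith
            _ ≤ r v + (((k:ℤ)-1) * A + (k:ℤ) * B) := by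
                rw [hsum_split]; linarith
            _ = r v + ((k : ℤ) - 1) * A + (k : ℤ) * B := by ring
        linarith [mul_comm (k : ℤ) (A + B)]
      have hstuck := hact v hvS
      have hWB : (∑ u ∈ Sᶜ, mgW m u) v = B := by
        rw [Finset.sum_apply, hB]
        refine Finset.sum_congr rfl (fun u hu => ?_)
        have huv : u ≠ v := by
          intro e
          exact absurd (e ▸ hvS) (Finset.mem_compl.mp hu)
        rw [mgW_apply m hloop, if_neg huv, sub_zero]
      rw [Pi.add_apply, hWB, hdegAB] at hstuck
      linarith

lemma mgPlay_round (m : V → V → ℕ) (hsymm : ∀ u v, m u v = m v u) (hloop : ∀ v, m v v = 0)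
    (r : V → ℤ) (L : List V) (hnd : L.Nodup) (htf : L.toFinset = Finset.univ) :
    mgPlay m r L = r := by
  funext u
  rw [mgPlay_eq_sum]
  have hcnt : ∀ v : V, L.count v = 1 := by
    intro v
    have hmem : v ∈ L := List.mem_toFinset.mp (htf ▸ Finset.mem_univ v)
    exact List.count_eq_one_of_mem hnd hmem
  have : ∑ v, (L.count v : ℤ) * mgW m v u = ∑ v, mgW m v u := by
    refine Finset.sum_congr rfl (fun v _ => ?_)
    rw [hcnt v]
    simp
  rw [this, mg_sum_W m hsymm hloop u]
  simp

/-- A recurrent divisor on a connected graph admits a full single round. -/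
lemma mgSingleRound [Nonempty V] (m : V → V → ℕ) (hsymm : ∀ u v, m u v = m v u)
    (hloop : ∀ v, m v v = 0) (hconn : mgConnected m) (r : V → ℤ)
    (hrec : mgRecurrent m r) :
    ∃ L : List V, L ≠ [] ∧ L.Nodup ∧ L.toFinset = Finset.univ ∧ mgLegal m r L := by
  obtain ⟨C, hCne, hCleg, hCplay⟩ := hrec
  obtain ⟨v₀, hv₀⟩ := List.exists_mem_of_ne_nil C hCne
  set k := C.count v₀ with hkdef
  have hcc := mgCycle_count_const m hsymm hloop hconn r C hCplay
  have hk : ∀ v : V, C.count v = k := fun v => hcc v v₀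
  have hk1 : 1 ≤ k := List.count_pos_iff.mpr hv₀
  obtain ⟨L, hnd, htf, hleg⟩ := mgRound_aux m hsymm hloop r C k hk hk1 hCleg
    (Finset.univ.card) Finset.univ rfl
  refine ⟨L, ?_, hnd, htf, ?_⟩
  · intro h
    subst h
    simp only [List.toFinset_nil] at htf
    exact absurd (htf ▸ Finset.mem_univ (Classical.arbitrary V)) (Finset.notMem_empty _)
  · have : r + ∑ u ∈ (Finset.univ : Finset V)ᶜ, mgW m u = r := by
      simp
    rwa [this] at hleg

/-- intermediate configurations in the apex graph -/
def apexCfg (M : ℕ) (s : V → ℤ) (a : ℤ) (F : Finset V) : Option V → ℤ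
  | some v => s v + (if v ∈ F then 0 else (M : ℤ))
  | none => a

lemma apex_deg_some (m : V → V → ℕ) (M : ℕ) (v : V) :
    mgDeg (apexM m M) (some v) = mgDeg m v + M := by
  simp only [mgDeg]
  rw [Fintype.sum_option]
  simp only [apexM]
  omega

lemma apex_deg_none (m : V → V → ℕ) (M : ℕ) :
    mgDeg (apexM m M) (none : Option V) = Fintype.card V * M := by
  simp only [mgDeg]
  rw [Fintype.sum_option]
  simp [apexM, Finset.sum_const, mul_comm]

lemma mgLegal_nodup_of_all_active (m : V → V → ℕ) :
    ∀ (L : List V) (s : V → ℤ), L.Nodup → (∀ v ∈ L, (mgDeg m v : ℤ) ≤ s v) →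
    mgLegal m s L := by
  intro L
  induction L with
  | nil => intro s _ _; trivial
  | cons a L ih =>
    intro s hnd hact
    refine ⟨hact a ((List.mem_cons_self (a := a) (l := L))), ih _ (List.nodup_cons.mp hnd).2 ?_⟩
    intro v hv
    have hva : v ≠ a := fun e => (List.nodup_cons.mp hnd).1 (e ▸ hv)
    exact le_trans (hact v (List.mem_cons_of_mem a hv)) (mgFire_mono_other m s a v hva)

lemma apex_lift (m : V → V → ℕ) (M : ℕ) :
    ∀ (R : List V) (s : V → ℤ) (a : ℤ) (F : Finset V),
    (∀ v ∈ R, v ∉ F) → R.Nodup → mgLegal m s R →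
    mgLegal (apexM m M) (apexCfg M s a F) (R.map some) ∧
    mgPlay (apexM m M) (apexCfg M s a F) (R.map some)
      = apexCfg M (mgPlay m s R) (a + M * R.length) (F ∪ R.toFinset) := by
  intro R
  induction R with
  | nil =>
    intro s a F _ _ _
    refine ⟨trivial, ?_⟩
    simp only [List.map_nil, List.length_nil, List.toFinset_nil, Finset.union_empty]
    show apexCfg M s a F = apexCfg M (mgPlay m s []) (a + M * 0) F
    simp [mgPlay]
  | cons v T ih =>
    intro s a F hmem hnd hleg
    obtain ⟨hv, hT⟩ : ((mgDeg m v : ℤ) ≤ s v) ∧ mgLegal m (mgFire m s v) T := hleg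
    have hvF : v ∉ F := hmem v ((List.mem_cons_self (a := v) (l := T)))
    have hhead : ((mgDeg (apexM m M) (some v) : ℤ)) ≤ apexCfg M s a F (some v) := by
      rw [apex_deg_some]
      show ((mgDeg m v + M : ℕ) : ℤ) ≤ s v + (if v ∈ F then 0 else (M:ℤ))
      rw [if_neg hvF]
      push_cast
      linarith
    have hfire : mgFire (apexM m M) (apexCfg M s a F) (some v)
        = apexCfg M (mgFire m s v) (a + M) (insert v F) := by
      funext o
      cases o with
      | none =>
        show (if (none : Option V) = some v then _ else apexCfg M s a F none
          + (apexM m M (some v) none : ℤ)) = a + M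
        rw [if_neg (by simp)]
        rfl
      | some u =>
        by_cases h : u = v
        · subst h
          show (if (some u : Option V) = some u then
              apexCfg M s a F (some u) - (mgDeg (apexM m M) (some u) : ℤ) else _)
            = mgFire m s u u + (if u ∈ insert u F then 0 else (M:ℤ))
          rw [if_pos rfl, if_pos (Finset.mem_insert_self u F), apex_deg_some]
          show s u + (if u ∈ F then 0 else (M:ℤ)) - ((mgDeg m u + M : ℕ) : ℤ)
            = (if u = u then s u - (mgDeg m u : ℤ) else _) + 0
          rw [if_neg hvF, if_pos rfl]
          push_cast
          ring
        · show (if (some u : Option V) = some v then _ else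
              apexCfg M s a F (some u) + (apexM m M (some v) (some u) : ℤ))
            = mgFire m s v u + (if u ∈ insert v F then 0 else (M:ℤ))
          rw [if_neg (by simp [h])]
          show s u + (if u ∈ F then 0 else (M:ℤ)) + (m v u : ℤ)
            = (if u = v then _ else s u + (m v u : ℤ)) + (if u ∈ insert v F then 0 else (M:ℤ))
          rw [if_neg h]
          simp only [Finset.mem_insert, h, false_or]
          ring
    have hmem' : ∀ u ∈ T, u ∉ insert v F := by
      intro u hu
      rw [Finset.mem_insert]
      rintro (e | e)
      · exact (List.nodup_cons.mp hnd).1 (e ▸ hu)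
      · exact hmem u (List.mem_cons_of_mem v hu) e
    obtain ⟨ihleg, ihplay⟩ := ih (mgFire m s v) (a + M) (insert v F) hmem'
      (List.nodup_cons.mp hnd).2 hT
    constructor
    · exact ⟨hhead, by rw [hfire]; exact ihleg⟩
    · show mgPlay (apexM m M) (mgFire (apexM m M) (apexCfg M s a F) (some v)) (T.map some) = _
      rw [hfire, ihplay]
      have e1 : a + M + M * T.length = a + M * (v :: T).length := by
        simp only [List.length_cons]
        push_cast
        ring
      have e2 : insert v F ∪ T.toFinset = F ∪ (v :: T).toFinset := by
        rw [List.toFinset_cons, Finset.insert_union, Finset.union_insert]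
      rw [e1, e2]
      rfl

/-- `M > dist_nonhalt_{G'}(f')` for the apex construction. -/
theorem stmt14 [Nonempty V] (m : V → V → ℕ) (hsymm : ∀ u v, m u v = m v u)
    (hloop : ∀ v, m v v = 0) (hconn : mgConnected m) (f : V → ℤ) (M : ℕ)
    (hMpos : 0 < M)
    (hM : (mgDistRec m f : ℤ) +
        max 0 (Finset.univ.sup' Finset.univ_nonempty (fun v => f v - (mgDeg m v : ℤ)))
      < (M : ℤ)) :
    mgDistNonhalt (apexM m M) (apexF f M) < M := by
  classical
  -- Step 1: the recurrence set is nonempty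
  have hg₁eff : mgEffective (fun v => max 0 ((mgDeg m v : ℤ) - f v)) :=
    fun v => le_max_left _ _
  have hact : ∀ v, (mgDeg m v : ℤ) ≤ (f + fun v => max 0 ((mgDeg m v : ℤ) - f v)) v := by
    intro v
    have := le_max_right (0:ℤ) ((mgDeg m v : ℤ) - f v)
    simp only [Pi.add_apply]
    linarith
  have hL₀nd : (Finset.univ : Finset V).toList.Nodup := Finset.nodup_toList _
  have hL₀tf : (Finset.univ : Finset V).toList.toFinset = Finset.univ :=
    Finset.toList_toFinset _
  have hL₀ne : (Finset.univ : Finset V).toList ≠ [] := by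
    intro e
    rw [e] at hL₀tf
    simp only [List.toFinset_nil] at hL₀tf
    exact absurd (hL₀tf ▸ Finset.mem_univ (Classical.arbitrary V)) (Finset.notMem_empty _)
  have hrec₁ : mgRecurrent m (f + fun v => max 0 ((mgDeg m v : ℤ) - f v)) :=
    ⟨(Finset.univ : Finset V).toList, hL₀ne,
      mgLegal_nodup_of_all_active m _ _ hL₀nd (fun v _ => hact v),
      mgPlay_round m hsymm hloop _ _ hL₀nd hL₀tf⟩
  have hne_set : {n : ℕ | ∃ g : V → ℤ, mgEffective g ∧ mgDegDiv g = (n : ℤ) ∧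
      mgRecurrent m (f + g)}.Nonempty := by
    refine ⟨(mgDegDiv (fun v => max 0 ((mgDeg m v : ℤ) - f v))).toNat,
      fun v => max 0 ((mgDeg m v : ℤ) - f v), hg₁eff, ?_, hrec₁⟩
    exact (Int.toNat_of_nonneg (Finset.sum_nonneg (fun v _ => hg₁eff v))).symm
  -- Step 2: extract an optimal g₀
  obtain ⟨g₀, hg₀eff, hg₀deg, hg₀rec⟩ :
      ∃ g : V → ℤ, mgEffective g ∧ mgDegDiv g = ((mgDistRec m f : ℕ) : ℤ) ∧
        mgRecurrent m (f + g) := Nat.sInf_mem hne_set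
  -- Step 3: single round for f + g₀
  obtain ⟨R, hRne, hRnd, hRtf, hRleg⟩ := mgSingleRound m hsymm hloop hconn (f + g₀) hg₀rec
  have hRlen : R.length = Fintype.card V := by
    rw [← List.toFinset_card_of_nodup hRnd, hRtf]
    rfl
  -- the lifted divisor
  have heq0 : apexF f M + (fun o => Option.elim o 0 g₀) = apexCfg M (f + g₀) 0 ∅ := by
    funext o
    cases o with
    | none => rfl
    | some v =>
      show f v + (M : ℤ) + g₀ v = (f v + g₀ v) + (if v ∈ (∅ : Finset V) then 0 else (M : ℤ))
      rw [if_neg (Finset.notMem_empty v)]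
      ring
  obtain ⟨hlegR, hplayR⟩ := apex_lift m M R (f + g₀) 0 ∅
    (fun v _ => Finset.notMem_empty v) hRnd hRleg
  have hplayRR : mgPlay m (f + g₀) R = f + g₀ := mgPlay_round m hsymm hloop _ R hRnd hRtf
  have hcfg2 : apexCfg M (mgPlay m (f + g₀) R) (0 + (M : ℤ) * (R.length : ℤ)) (∅ ∪ R.toFinset)
      = apexCfg M (f + g₀) ((M : ℤ) * (Fintype.card V : ℤ)) Finset.univ := by
    rw [hplayRR, hRlen, hRtf]
    norm_num
  -- Step 4: the legal cycle in the apex graph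
  have hCyc : mgRecurrent (apexM m M) (apexF f M + (fun o => Option.elim o 0 g₀)) := by
    refine ⟨R.map some ++ [none], by simp, ?_, ?_⟩
    · rw [mgLegal_append, heq0, hplayR, hcfg2]
      refine ⟨hlegR, ?_, trivial⟩
      show ((mgDeg (apexM m M) none : ℕ) : ℤ) ≤ (M : ℤ) * (Fintype.card V : ℤ)
      rw [apex_deg_none]
      push_cast
      linarith
    · rw [mgPlay_append, heq0, hplayR, hcfg2]
      show mgFire (apexM m M) (apexCfg M (f + g₀) ((M : ℤ) * (Fintype.card V : ℤ))
        Finset.univ) none = apexCfg M (f + g₀) 0 ∅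
      funext o
      cases o with
      | none =>
        show (if (none : Option V) = none then
            (M : ℤ) * (Fintype.card V : ℤ) - (mgDeg (apexM m M) none : ℤ) else _) = (0 : ℤ)
        rw [if_pos rfl, apex_deg_none]
        push_cast
        ring
      | some v =>
        show (if (some v : Option V) = none then _ else
            apexCfg M (f + g₀) _ Finset.univ (some v) + (apexM m M none (some v) : ℤ))
          = (f v + g₀ v) + (if v ∈ (∅ : Finset V) then 0 else (M : ℤ))
        rw [if_neg (by simp), if_neg (Finset.notMem_empty v)]
        show (f v + g₀ v) + (if v ∈ (Finset.univ : Finset V) then 0 else (M : ℤ)) + (M : ℤ)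
          = (f v + g₀ v) + (M : ℤ)
        rw [if_pos (Finset.mem_univ v)]
        ring
  -- Step 5: conclude
  have hnh := mgRecurrent_not_halting (apexM m M) _ hCyc
  have hdeg' : mgDegDiv (fun o : Option V => Option.elim o 0 g₀) = ((mgDistRec m f : ℕ) : ℤ) := by
    rw [← hg₀deg]
    show ∑ o : Option V, Option.elim o 0 g₀ = ∑ v, g₀ v
    rw [Fintype.sum_option]
    simp
  have hmem : mgDistRec m f ∈ {n : ℕ | ∃ g : Option V → ℤ, mgEffective g ∧
      mgDegDiv g = (n : ℤ) ∧ ¬ mgHalting (apexM m M) (apexF f M + g)} := by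
    refine ⟨fun o => Option.elim o 0 g₀, ?_, hdeg', hnh⟩
    intro o
    cases o with
    | none => exact le_refl 0
    | some v => exact hg₀eff v
  have hle : mgDistNonhalt (apexM m M) (apexF f M) ≤ mgDistRec m f := Nat.sInf_le hmem
  have hlt : mgDistRec m f < M := by
    have h0 : (0:ℤ) ≤ max 0 (Finset.univ.sup' Finset.univ_nonempty
        (fun v => f v - (mgDeg m v : ℤ))) := le_max_left _ _
    have : ((mgDistRec m f : ℕ) : ℤ) < (M : ℤ) := by linarith
    exact_mod_cast this
  omega
end
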